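/- arXiv:2402.17919 — 9 statements merged into one kernel-verified Lean document; each statement's English description precedes it below -/
import Mathlib

section
/- Let α ∈ (0,2), θ > 0, c > 0 and λ ≥ 0. Then the improper integral ∫_{(0,∞)} (e^{−λx} − 1) · (−c e^{−θx}) / (Γ(−α/2) · x^{α/2+1}) dx converges and equals −c·((θ+λ)^{α/2} − θ^{α/2}). -/
open MeasureTheory Set

section Aux
open Filter Real
open MeasureTheory Set Filter Real

/-- integrability of `x ^ (-s) * exp (-(r*x))` on `(0,∞)` for `s ∈ (0,1)`, `r > 0`. -/
lemma aux_int {r s : ℝ} (hr : 0 < r) (hs0 : 0 < s) (hs1 : s < 1) :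
    IntegrableOn (fun x : ℝ => x ^ (-s) * Real.exp (-(r * x))) (Ioi 0) := by
  have hcont : ContinuousOn (fun x : ℝ => x ^ (-s) * Real.exp (-(r * x))) (Ioi 0) := by
    refine ContinuousOn.mul ?_ ?_
    · exact fun x hx => ((Real.continuousAt_rpow_const x (-s) (Or.inl (ne_of_gt hx))).continuousWithinAt)
    · exact (Real.continuous_exp.comp (continuous_const.mul continuous_id).neg).continuousOn
  rw [← Ioc_union_Ioi_eq_Ioi (zero_le_one : (0:ℝ) ≤ 1), integrableOn_union]
  constructor
  · have hg : IntegrableOn (fun x : ℝ => x ^ (-s)) (Ioc 0 1) := by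
      rw [integrableOn_Ioc_iff_integrableOn_Ioo]
      exact (intervalIntegral.integrableOn_Ioo_rpow_iff zero_lt_one).2 (by linarith)
    refine Integrable.mono' hg ((hcont.mono (Ioc_subset_Ioi_self)).aestronglyMeasurable measurableSet_Ioc) ?_
    filter_upwards [ae_restrict_mem measurableSet_Ioc] with x hx
    have hx0 : 0 < x := hx.1
    have h1 : Real.exp (-(r * x)) ≤ 1 := Real.exp_le_one_iff.2 (by nlinarith)
    have h2 : 0 ≤ x ^ (-s) := Real.rpow_nonneg hx0.le _
    rw [Real.norm_eq_abs, abs_mul, abs_of_nonneg h2, abs_of_nonneg (Real.exp_pos _).le]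
    nlinarith [Real.exp_pos (-(r * x))]
  · refine Integrable.mono' (exp_neg_integrableOn_Ioi 1 hr) ((hcont.mono (Ioi_subset_Ioi zero_le_one)).aestronglyMeasurable measurableSet_Ioi) ?_
    filter_upwards [ae_restrict_mem measurableSet_Ioi] with x hx
    have hx1 : (1:ℝ) ≤ x := le_of_lt hx
    have h1 : x ^ (-s) ≤ 1 := Real.rpow_le_one_of_one_le_of_nonpos hx1 (by linarith)
    have h2 : 0 ≤ x ^ (-s) := Real.rpow_nonneg (by linarith) _
    rw [Real.norm_eq_abs, abs_mul, abs_of_nonneg h2, abs_of_nonneg (Real.exp_pos _).le, neg_mul]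
    nlinarith [Real.exp_pos (-(r * x))]

lemma aux_bound {a b : ℝ} (hb : 0 ≤ b) (hab : b ≤ a) {x : ℝ} (hx : 0 ≤ x) :
    |Real.exp (-(a * x)) - Real.exp (-(b * x))| ≤ (a - b) * x := by
  have h1 : Real.exp (-(a * x)) ≤ Real.exp (-(b * x)) :=
    Real.exp_le_exp.2 (by nlinarith)
  rw [abs_of_nonpos (by linarith), neg_sub]
  have hA : Real.exp (-(a * x)) = Real.exp (-(b * x)) * Real.exp (-((a - b) * x)) := by
    rw [← Real.exp_add]; ring_nf
  have hB : 1 - (a - b) * x ≤ Real.exp (-((a - b) * x)) := by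
    have := Real.add_one_le_exp (-((a - b) * x)); linarith
  have hC : Real.exp (-(b * x)) ≤ 1 := Real.exp_le_one_iff.2 (by nlinarith)
  nlinarith [Real.exp_pos (-(b * x)), Real.exp_pos (-((a - b) * x))]

lemma key_lemma {s a b : ℝ} (hs0 : 0 < s) (hs1 : s < 1) (hb : 0 < b) (hab : b ≤ a) :
    IntegrableOn (fun x : ℝ => (Real.exp (-(a * x)) - Real.exp (-(b * x))) * x ^ (-s - 1)) (Ioi 0) ∧
    ∫ x in Ioi (0:ℝ), (Real.exp (-(a * x)) - Real.exp (-(b * x))) * x ^ (-s - 1)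
      = Real.Gamma (-s) * (a ^ s - b ^ s) := by
  have ha : 0 < a := lt_of_lt_of_le hb hab
  set f : ℝ → ℝ := fun x => (Real.exp (-(a * x)) - Real.exp (-(b * x))) * x ^ (-s - 1) with hf_def
  set h : ℝ → ℝ := fun x => (a * Real.exp (-(a * x)) - b * Real.exp (-(b * x))) * x ^ (-s) / s with hh_def
  -- continuity of f on Ioi 0
  have hcont : ContinuousOn f (Ioi 0) := by
    refine ContinuousOn.mul ?_ ?_
    · exact ((Real.continuous_exp.comp (continuous_const.mul continuous_id).neg).sub
        (Real.continuous_exp.comp (continuous_const.mul continuous_id).neg)).continuousOn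
    · exact fun x hx => (Real.continuousAt_rpow_const x _ (Or.inl (ne_of_gt hx))).continuousWithinAt
  -- integrability of f
  have hf : IntegrableOn f (Ioi 0) := by
    rw [← Ioc_union_Ioi_eq_Ioi (zero_le_one : (0:ℝ) ≤ 1), integrableOn_union]
    constructor
    · have hg : IntegrableOn (fun x : ℝ => (a - b) * x ^ (-s)) (Ioc 0 1) := by
        rw [integrableOn_Ioc_iff_integrableOn_Ioo]
        exact ((intervalIntegral.integrableOn_Ioo_rpow_iff zero_lt_one).2 (by linarith)).const_mul _
      refine Integrable.mono' hg ((hcont.mono Ioc_subset_Ioi_self).aestronglyMeasurable measurableSet_Ioc) ?_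
      filter_upwards [ae_restrict_mem measurableSet_Ioc] with x hx
      have hx0 : 0 < x := hx.1
      have h2 : (0:ℝ) ≤ x ^ (-s - 1) := Real.rpow_nonneg hx0.le _
      have hxx : x * x ^ (-s - 1) = x ^ (-s) := by
        have h3 := Real.rpow_add hx0 1 (-s - 1)
        rw [Real.rpow_one] at h3
        rw [← h3]; congr 1; try ring
      rw [Real.norm_eq_abs, hf_def, abs_mul, abs_of_nonneg h2]
      calc |Real.exp (-(a * x)) - Real.exp (-(b * x))| * x ^ (-s - 1)
          ≤ ((a - b) * x) * x ^ (-s - 1) := by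
            exact mul_le_mul_of_nonneg_right (aux_bound hb.le hab hx0.le) h2
        _ = (a - b) * x ^ (-s) := by rw [mul_assoc, hxx]
    · refine Integrable.mono' (exp_neg_integrableOn_Ioi 1 hb)
        ((hcont.mono (Ioi_subset_Ioi zero_le_one)).aestronglyMeasurable measurableSet_Ioi) ?_
      filter_upwards [ae_restrict_mem measurableSet_Ioi] with x hx
      have hx1 : (1:ℝ) ≤ x := le_of_lt hx
      have h1 : x ^ (-s - 1) ≤ 1 := Real.rpow_le_one_of_one_le_of_nonpos hx1 (by linarith)
      have h2 : (0:ℝ) ≤ x ^ (-s - 1) := Real.rpow_nonneg (by linarith) _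
      have h3 : |Real.exp (-(a * x)) - Real.exp (-(b * x))| ≤ Real.exp (-(b * x)) := by
        have hle : Real.exp (-(a * x)) ≤ Real.exp (-(b * x)) := Real.exp_le_exp.2 (by nlinarith)
        rw [abs_of_nonpos (by linarith), neg_sub]
        nlinarith [Real.exp_pos (-(a * x))]
      rw [Real.norm_eq_abs, hf_def, abs_mul, abs_of_nonneg h2, neg_mul]
      nlinarith [abs_nonneg (Real.exp (-(a * x)) - Real.exp (-(b * x))), Real.exp_pos (-(b * x))]
  -- integrability of h
  have hha : IntegrableOn (fun x : ℝ => x ^ (-s) * Real.exp (-(a * x))) (Ioi 0) := aux_int ha hs0 hs1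
  have hhb : IntegrableOn (fun x : ℝ => x ^ (-s) * Real.exp (-(b * x))) (Ioi 0) := aux_int hb hs0 hs1
  have hh : IntegrableOn h (Ioi 0) := by
    have : IntegrableOn (fun x : ℝ =>
        (a * (x ^ (-s) * Real.exp (-(a * x))) - b * (x ^ (-s) * Real.exp (-(b * x)))) / s) (Ioi 0) :=
      (((hha.const_mul a).sub (hhb.const_mul b)).div_const s)
    refine this.congr_fun (fun x _ => ?_) measurableSet_Ioi
    simp only [hh_def]; ring
  -- the antiderivative
  set G : ℝ → ℝ := fun x => (Real.exp (-(a * x)) - Real.exp (-(b * x))) * x ^ (-s) / (-s) with hG_def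
  have hG0 : G 0 = 0 := by simp [hG_def]
  have hderiv : ∀ x ∈ Ioi (0:ℝ), HasDerivAt G (f x + h x) x := by
    intro x hx
    have hx0 : (0:ℝ) < x := hx
    have hd1 : HasDerivAt (fun x : ℝ => Real.exp (-(a * x))) (Real.exp (-(a * x)) * -(a * 1)) x :=
      (((hasDerivAt_id x).const_mul a).neg).exp
    have hd2 : HasDerivAt (fun x : ℝ => Real.exp (-(b * x))) (Real.exp (-(b * x)) * -(b * 1)) x :=
      (((hasDerivAt_id x).const_mul b).neg).exp
    have hd3 : HasDerivAt (fun x : ℝ => x ^ (-s)) (-s * x ^ (-s - 1)) x :=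
      Real.hasDerivAt_rpow_const (Or.inl (ne_of_gt hx0))
    have hD := (((hd1.sub hd2).mul hd3).div_const (-s))
    convert hD using 1
    · rfl
    · rfl
    · rfl
    have hs' : s ≠ 0 := hs0.ne'
    simp only [hf_def, hh_def, Pi.sub_apply]
    rw [eq_div_iff (neg_ne_zero.2 hs')]
    field_simp
    ring
  have htop : Tendsto G atTop (nhds 0) := by
    have h1 : Tendsto (fun x : ℝ => Real.exp (-(a * x))) atTop (nhds 0) :=
      Real.tendsto_exp_neg_atTop_nhds_zero.comp (Tendsto.const_mul_atTop ha tendsto_id)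
    have h2 : Tendsto (fun x : ℝ => Real.exp (-(b * x))) atTop (nhds 0) :=
      Real.tendsto_exp_neg_atTop_nhds_zero.comp (Tendsto.const_mul_atTop hb tendsto_id)
    have h3 : Tendsto (fun x : ℝ => x ^ (-s)) atTop (nhds 0) := tendsto_rpow_neg_atTop hs0
    have := ((h1.sub h2).mul h3).div_const (-s)
    simpa using this
  have hcontG : ContinuousWithinAt G (Ici 0) 0 := by
    rw [ContinuousWithinAt, hG0]
    apply squeeze_zero_norm'
      (a := fun x : ℝ => (a - b) / s * x ^ (1 - s))
    · filter_upwards [self_mem_nhdsWithin] with x (hx : x ∈ Ici (0:ℝ))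
      rcases eq_or_lt_of_le (show (0:ℝ) ≤ x from hx) with h0 | h0
      · simp [hG_def, ← h0, Real.zero_rpow (by intro hc; nlinarith : 1 - s ≠ 0),
          Real.zero_rpow (ne_of_lt (neg_neg_iff_pos.2 hs0))]
      · have h2 : (0:ℝ) ≤ x ^ (-s) := Real.rpow_nonneg h0.le _
        have hxx : x * x ^ (-s) = x ^ (1 - s) := by
          have h3 := Real.rpow_add h0 1 (-s)
          rw [Real.rpow_one] at h3
          rw [← h3]; congr 1; try ring
        rw [Real.norm_eq_abs, hG_def]
        simp only
        rw [abs_div, abs_mul, abs_of_nonneg h2, abs_neg, abs_of_pos hs0]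
        calc |Real.exp (-(a * x)) - Real.exp (-(b * x))| * x ^ (-s) / s
            ≤ ((a - b) * x) * x ^ (-s) / s := by
              gcongr
              exact aux_bound hb.le hab h0.le
          _ = (a - b) / s * x ^ (1 - s) := by rw [mul_assoc, hxx]; ring
    · have hc1 : ContinuousWithinAt (fun x : ℝ => x ^ (1 - s)) (Ici 0) 0 :=
        (Real.continuousAt_rpow_const 0 (1 - s) (Or.inr (by linarith))).continuousWithinAt
      have := (hc1.tendsto).const_mul ((a - b) / s)
      rw [Real.zero_rpow (by intro hc; nlinarith : 1 - s ≠ 0), mul_zero] at this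
      exact this
  -- FTC
  have hFTC : ∫ x in Ioi (0:ℝ), (f x + h x) = 0 - G 0 :=
    MeasureTheory.integral_Ioi_of_hasDerivAt_of_tendsto hcontG hderiv (hf.add hh) htop
  rw [hG0, sub_zero] at hFTC
  -- value of ∫ h
  have hGamma : Real.Gamma (1 - s) = -s * Real.Gamma (-s) := by
    have := Real.Gamma_add_one (s := -s) (by intro hc; nlinarith)
    rw [show -s + 1 = 1 - s by ring] at this
    exact this
  have e_gen : ∀ r : ℝ, 0 < r →
      ∫ x in Ioi (0:ℝ), x ^ (-s) * Real.exp (-(r * x)) = Real.Gamma (1 - s) * r ^ (s - 1) := by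
    intro r hr
    have := Real.integral_rpow_mul_exp_neg_mul_Ioi (show (0:ℝ) < 1 - s by linarith) hr
    rw [show (1 - s) - 1 = -s by ring] at this
    rw [this, one_div, Real.inv_rpow hr.le, ← Real.rpow_neg hr.le]
    rw [show -(1 - s) = s - 1 by ring]; ring
  have hint_h : ∫ x in Ioi (0:ℝ), h x = -(Real.Gamma (-s)) * (a ^ s - b ^ s) := by
    have step1 : ∫ x in Ioi (0:ℝ), h x =
        (∫ x in Ioi (0:ℝ), (a * (x ^ (-s) * Real.exp (-(a * x))) -
          b * (x ^ (-s) * Real.exp (-(b * x))))) / s := by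
      rw [← integral_div]
      refine setIntegral_congr_fun measurableSet_Ioi (fun x _ => ?_)
      simp only [hh_def]; ring
    rw [step1, integral_sub (hha.const_mul a) (hhb.const_mul b),
      integral_const_mul, integral_const_mul, e_gen a ha, e_gen b hb]
    have haa : a * (Real.Gamma (1 - s) * a ^ (s - 1)) = Real.Gamma (1 - s) * a ^ s := by
      rw [show a ^ s = a ^ (1 + (s - 1)) by norm_num, Real.rpow_add ha, Real.rpow_one]; ring
    have hbb : b * (Real.Gamma (1 - s) * b ^ (s - 1)) = Real.Gamma (1 - s) * b ^ s := by
      rw [show b ^ s = b ^ (1 + (s - 1)) by norm_num, Real.rpow_add hb, Real.rpow_one]; ring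
    rw [haa, hbb, hGamma]
    field_simp
    ring
  refine ⟨hf, ?_⟩
  have : ∫ x in Ioi (0:ℝ), f x = (∫ x in Ioi (0:ℝ), (f x + h x)) - ∫ x in Ioi (0:ℝ), h x := by
    rw [integral_add hf hh]; ring
  rw [hf_def] at this ⊢
  rw [this, hFTC, hint_h]; ring

end Aux

/-- Laplace-exponent identity for the Lévy density of the tempered stable subordinator:
for `α ∈ (0,2)`, `θ > 0`, `c > 0` and `λ ≥ 0`, the integral
`∫_{(0,∞)} (e^{−λx} − 1) · (−c e^{−θx}) / (Γ(−α/2) · x^{α/2+1}) dx` converges and equals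
`−c·((θ+λ)^{α/2} − θ^{α/2})`. -/
theorem tempered_stable_laplace_exponent
    (α θ c lam : ℝ) (hα : α ∈ Set.Ioo (0 : ℝ) 2) (hθ : 0 < θ) (hc : 0 < c) (hlam : 0 ≤ lam) :
    IntegrableOn
      (fun x : ℝ => (Real.exp (-lam * x) - 1) * (-c * Real.exp (-θ * x)) /
        (Real.Gamma (-α / 2) * x ^ (α / 2 + 1))) (Set.Ioi 0) ∧
    (∫ x in Set.Ioi (0 : ℝ), (Real.exp (-lam * x) - 1) * (-c * Real.exp (-θ * x)) /
        (Real.Gamma (-α / 2) * x ^ (α / 2 + 1)))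
      = -c * ((θ + lam) ^ (α / 2) - θ ^ (α / 2)) := by
  obtain ⟨hα0, hα2⟩ := hα
  set s : ℝ := α / 2 with hs_def
  have hs0 : 0 < s := by positivity
  have hs1 : s < 1 := by rw [hs_def]; linarith
  have hsg : -α / 2 = -s := by rw [hs_def]; ring
  have hΓ : Real.Gamma (-s) ≠ 0 := by
    refine Real.Gamma_ne_zero (fun m => ?_)
    rcases m with _ | k
    · simpa using hs0.ne'
    · push_cast
      intro hm
      have hk : (0:ℝ) ≤ (k : ℝ) := Nat.cast_nonneg k
      linarith
  have hab : θ ≤ θ + lam := le_add_of_nonneg_right hlam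
  obtain ⟨hint, hval⟩ := key_lemma hs0 hs1 hθ hab
  have heq : EqOn
      (fun x : ℝ => -c / Real.Gamma (-s) *
        ((Real.exp (-((θ + lam) * x)) - Real.exp (-(θ * x))) * x ^ (-s - 1)))
      (fun x : ℝ => (Real.exp (-lam * x) - 1) * (-c * Real.exp (-θ * x)) /
        (Real.Gamma (-α / 2) * x ^ (α / 2 + 1))) (Ioi 0) := by
    intro x hx
    have hxp : (0:ℝ) < x := hx
    have e1 : Real.exp (-((θ + lam) * x)) = Real.exp (-lam * x) * Real.exp (-(θ * x)) := by
      rw [← Real.exp_add]; ring_nf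
    have e2 : x ^ (-s - 1) = (x ^ (s + 1))⁻¹ := by
      rw [← Real.rpow_neg hxp.le]; congr 1; ring
    have e3 : Real.exp (-θ * x) = Real.exp (-(θ * x)) := by ring_nf
    have hxpow : (0:ℝ) < x ^ (s + 1) := Real.rpow_pos_of_pos hxp _
    simp only [hsg, e1, e2, e3]
    field_simp [hΓ, hxpow.ne']
    rw [show (α + 2) / 2 = s + 1 by rw [hs_def]; ring]
  constructor
  · exact MeasureTheory.IntegrableOn.congr_fun (hint.const_mul (-c / Real.Gamma (-s))) heq measurableSet_Ioi
  · rw [← setIntegral_congr_fun measurableSet_Ioi heq, integral_const_mul, hval]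
    field_simp
end

section
/- Let α ∈ (0,2), θ > 0, c > 0 and u ∈ ℝ. Then the improper integral ∫_{(0,∞)} (e^{iux} − 1) · (−c e^{−θx}) / (Γ(−α/2) · x^{α/2+1}) dx converges and equals −c·((θ − iu)^{α/2} − θ^{α/2}), where (θ − iu)^{α/2} denotes the principal branch of the complex power. -/
open MeasureTheory Set

section TSauxSection
open MeasureTheory Set Complex Filter

namespace TSaux



noncomputable def z (θ u t : ℝ) : ℂ := (θ : ℂ) - t * u * Complex.I

lemma z_re (θ u t : ℝ) : (z θ u t).re = θ := by simp [z]

lemma z_slit {θ : ℝ} (hθ : 0 < θ) (u t : ℝ) : z θ u t ∈ Complex.slitPlane :=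
  Complex.mem_slitPlane_iff.2 (Or.inl (by rw [z_re]; exact hθ))

lemma z_ne_zero {θ : ℝ} (hθ : 0 < θ) (u t : ℝ) : z θ u t ≠ 0 :=
  Complex.slitPlane_ne_zero (z_slit hθ u t)

lemma z_zero (θ u : ℝ) : z θ u 0 = (θ : ℂ) := by simp [z]

lemma integrableOn_rpow_exp {p θ : ℝ} (hp : -1 < p) (hθ : 0 < θ) :
    IntegrableOn (fun x : ℝ => x ^ p * Real.exp (-θ * x)) (Ioi 0) := by
  have h := integrableOn_rpow_mul_exp_neg_mul_rpow hp one_pos hθ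
  refine h.congr_fun (fun x hx => ?_) measurableSet_Ioi
  simp only [Real.rpow_one]

lemma contOn_aux {θ u : ℝ} (p t : ℝ) :
    ContinuousOn (fun x : ℝ => ((x ^ p : ℝ) : ℂ) * Complex.exp (-(z θ u t) * x)) (Ioi 0) := by
  intro x hx
  have h1 : ContinuousAt (fun x : ℝ => x ^ p) x :=
    Real.continuousAt_rpow_const x p (Or.inl (ne_of_gt hx))
  have h2 : ContinuousAt (fun x : ℝ => Complex.exp (-(z θ u t) * x)) x := by
    apply Complex.continuous_exp.continuousAt.comp
    exact (continuous_const.mul Complex.continuous_ofReal).continuousAt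
  exact ((Complex.continuous_ofReal.continuousAt.comp h1).mul h2).continuousWithinAt

lemma norm_aux {θ u : ℝ} (p t : ℝ) {x : ℝ} (hx : 0 < x) :
    ‖((x ^ p : ℝ) : ℂ) * Complex.exp (-(z θ u t) * x)‖ = x ^ p * Real.exp (-θ * x) := by
  rw [norm_mul, Complex.norm_real, Real.norm_eq_abs,
    _root_.abs_of_nonneg (Real.rpow_nonneg hx.le _), Complex.norm_exp]
  congr 2
  simp [z]

lemma integrableOn_cexp {p θ : ℝ} (hp : -1 < p) (hθ : 0 < θ) (u t : ℝ) :
    IntegrableOn (fun x : ℝ => ((x ^ p : ℝ) : ℂ) * Complex.exp (-(z θ u t) * x)) (Ioi 0) := by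
  refine (integrableOn_rpow_exp hp hθ).mono'
    ((contOn_aux p t).aestronglyMeasurable measurableSet_Ioi) ?_
  filter_upwards [ae_restrict_mem measurableSet_Ioi] with x hx
  rw [norm_aux p t hx]



lemma hasDerivAt_cexp_z {θ u : ℝ} (x t : ℝ) :
    HasDerivAt (fun t : ℝ => Complex.exp (-(z θ u t) * x))
      ((u : ℂ) * Complex.I * x * Complex.exp (-(z θ u t) * x)) t := by
  have key : ∀ s : ℝ, -(z θ u s) * x = -(θ : ℂ) * x + s * ((u : ℂ) * Complex.I * x) := by
    intro s; simp only [z]; ring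
  have h1 : HasDerivAt (fun w : ℂ => Complex.exp (-(θ : ℂ) * x + w * ((u : ℂ) * Complex.I * x)))
      (((u : ℂ) * Complex.I * x) * Complex.exp (-(θ : ℂ) * x + t * ((u : ℂ) * Complex.I * x)))
      (t : ℂ) := by
    have h0 : HasDerivAt (fun w : ℂ => -(θ : ℂ) * x + w * ((u : ℂ) * Complex.I * x))
        ((u : ℂ) * Complex.I * x) (t : ℂ) := by
      simpa using ((hasDerivAt_id (t : ℂ)).mul_const ((u : ℂ) * Complex.I * x)).const_add
        (-(θ : ℂ) * x)
    simpa [mul_comm] using h0.cexp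
  have h2 := h1.comp_ofReal
  simp only [← key] at h2
  convert h2 using 1

lemma tendsto_f_top {θ u : ℝ} (hθ : 0 < θ) (p t : ℝ) :
    Tendsto (fun x : ℝ => ((x ^ p : ℝ) : ℂ) * Complex.exp (-(z θ u t) * x)) atTop (nhds 0) := by
  apply squeeze_zero_norm' ?_ (tendsto_rpow_mul_exp_neg_mul_atTop_nhds_zero p θ hθ)
  filter_upwards [eventually_gt_atTop (0 : ℝ)] with x hx
  rw [norm_aux p t hx]

/-- Integration by parts identity. -/
lemma ibp {ρ θ : ℝ} (hρ0 : 0 < ρ) (hρ1 : ρ < 1) (hθ : 0 < θ) (u t : ℝ) :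
    ∫ x in Ioi (0:ℝ), ((x ^ (1 - ρ) : ℝ) : ℂ) * Complex.exp (-(z θ u t) * x)
      = ((1 : ℂ) - ρ) / z θ u t *
        ∫ x in Ioi (0:ℝ), ((x ^ (-ρ) : ℝ) : ℂ) * Complex.exp (-(z θ u t) * x) := by
  set w := z θ u t with hw
  set f : ℝ → ℂ := fun x => ((x ^ (1 - ρ) : ℝ) : ℂ) * Complex.exp (-w * x) with hf
  set f' : ℝ → ℂ := fun x =>
    (((1 : ℂ) - ρ) * ((x ^ (-ρ) : ℝ) : ℂ) - w * ((x ^ (1 - ρ) : ℝ) : ℂ)) * Complex.exp (-w * x)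
    with hf'
  have hderiv : ∀ x ∈ Ioi (0:ℝ), HasDerivAt f (f' x) x := by
    intro x hx
    have h1 : HasDerivAt (fun x : ℝ => ((x ^ (1 - ρ) : ℝ) : ℂ)) ((1 - ρ) * x ^ (-ρ) : ℝ) x := by
      have := (Real.hasDerivAt_rpow_const (p := 1 - ρ) (Or.inl (ne_of_gt hx))).ofReal_comp
      convert this using 1
      norm_num
    have h2 : HasDerivAt (fun x : ℝ => Complex.exp (-w * x)) (-w * Complex.exp (-w * x)) x := by
      have h0 : HasDerivAt (fun y : ℂ => Complex.exp (-w * y)) (-w * Complex.exp (-w * x)) (x : ℂ) := by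
        simpa [mul_comm] using (((hasDerivAt_id (x : ℂ)).const_mul (-w)).cexp)
      exact h0.comp_ofReal
    have := h1.mul h2
    have hd' : HasDerivAt f _ x := this
    refine hd'.congr_deriv ?_
    simp only [hf']
    push_cast
    ring
  have hcont : ContinuousWithinAt f (Ici 0) 0 := by
    have h1 : ContinuousAt (fun x : ℝ => x ^ (1 - ρ)) 0 :=
      Real.continuousAt_rpow_const 0 (1 - ρ) (Or.inr (by linarith))
    have h2 : ContinuousAt (fun x : ℝ => Complex.exp (-w * x)) 0 := by
      apply Complex.continuous_exp.continuousAt.comp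
      exact (continuous_const.mul Complex.continuous_ofReal).continuousAt
    exact ((Complex.continuous_ofReal.continuousAt.comp h1).mul h2).continuousWithinAt
  have hint : IntegrableOn f' (Ioi 0) := by
    have hA := (integrableOn_cexp (by linarith : (-1:ℝ) < -ρ) hθ u t).const_mul ((1:ℂ) - ρ)
    have hB := (integrableOn_cexp (by linarith : (-1:ℝ) < 1 - ρ) hθ u t).const_mul w
    have hAB : IntegrableOn (fun x =>
        ((1:ℂ) - ρ) * (((x ^ (-ρ) : ℝ) : ℂ) * Complex.exp (-z θ u t * x))
          - w * (((x ^ (1 - ρ) : ℝ) : ℂ) * Complex.exp (-z θ u t * x))) (Ioi 0) := hA.sub hB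
    refine hAB.congr_fun (fun x hx => ?_) measurableSet_Ioi
    simp only [hf']; ring
  have hlim : Tendsto f atTop (nhds 0) := tendsto_f_top hθ (1 - ρ) t
  have key := integral_Ioi_of_hasDerivAt_of_tendsto hcont hderiv hint hlim
  have hf0 : f 0 = 0 := by
    simp only [hf]
    rw [Real.zero_rpow (by linarith : 1 - ρ ≠ 0)]
    simp
  rw [hf0, sub_zero] at key
  -- split the integral
  have hA := (integrableOn_cexp (by linarith : (-1:ℝ) < -ρ) hθ u t)
  have hB := (integrableOn_cexp (by linarith : (-1:ℝ) < 1 - ρ) hθ u t)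
  have split : ∫ x in Ioi (0:ℝ), f' x
      = ((1:ℂ) - ρ) * (∫ x in Ioi (0:ℝ), ((x ^ (-ρ) : ℝ) : ℂ) * Complex.exp (-w * x))
        - w * ∫ x in Ioi (0:ℝ), ((x ^ (1 - ρ) : ℝ) : ℂ) * Complex.exp (-w * x) := by
    rw [← integral_const_mul, ← integral_const_mul, ← integral_sub (hA.const_mul _) (hB.const_mul _)]
    refine setIntegral_congr_fun measurableSet_Ioi (fun x hx => ?_)
    simp only [hf']; ring
  rw [split] at key
  have hw0 : w ≠ 0 := z_ne_zero hθ u t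
  rw [div_mul_eq_mul_div, eq_div_iff hw0]
  linear_combination (-1 : ℂ) * key


lemma F_at_zero {ρ θ : ℝ} (hρ0 : 0 < ρ) (hρ1 : ρ < 1) (hθ : 0 < θ) (u : ℝ) :
    ∫ x in Ioi (0:ℝ), ((x ^ (-ρ) : ℝ) : ℂ) * Complex.exp (-(z θ u 0) * x)
      = (Real.Gamma (1 - ρ) : ℂ) * (θ : ℂ) ^ ((ρ : ℂ) - 1) := by
  have key := Complex.integral_cpow_mul_exp_neg_mul_Ioi
    (a := ((1 - ρ : ℝ) : ℂ)) (r := θ) (by simp; linarith) hθ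
  have heq : ∀ x ∈ Ioi (0:ℝ), ((x ^ (-ρ) : ℝ) : ℂ) * Complex.exp (-(z θ u 0) * x)
      = (x : ℂ) ^ (((1 - ρ : ℝ) : ℂ) - 1) * Complex.exp (-((θ : ℂ) * x)) := by
    intro x hx
    rw [z_zero, Complex.ofReal_cpow hx.le]
    have h : ((-ρ : ℝ) : ℂ) = ((1 - ρ : ℝ) : ℂ) - 1 := by push_cast; ring
    rw [h, neg_mul]
  rw [setIntegral_congr_fun measurableSet_Ioi heq, key]
  have h1 : ((1:ℂ) / (θ:ℂ)) ^ ((1 - ρ : ℝ) : ℂ) = (θ : ℂ) ^ ((ρ:ℂ) - 1) := by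
    have e1 : ((1:ℂ)/(θ:ℂ)) = (((1/θ : ℝ)):ℂ) := by push_cast; ring
    have e2 : ((ρ:ℂ) - 1) = ((ρ - 1 : ℝ) : ℂ) := by push_cast; ring
    rw [e1, e2, ← Complex.ofReal_cpow (by positivity), ← Complex.ofReal_cpow hθ.le]
    congr 1
    rw [one_div, Real.inv_rpow hθ.le, ← Real.rpow_neg hθ.le]
    ring_nf
  rw [h1, Complex.Gamma_ofReal, mul_comm]

lemma F'_continuousOn {ρ θ u : ℝ} (t : ℝ) :
    ContinuousOn (fun x : ℝ => ((x ^ (-ρ) : ℝ) : ℂ) *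
      ((u : ℂ) * Complex.I * x * Complex.exp (-(z θ u t) * x))) (Ioi 0) := by
  intro x hx
  have h1 : ContinuousAt (fun x : ℝ => x ^ (-ρ)) x :=
    Real.continuousAt_rpow_const x (-ρ) (Or.inl (ne_of_gt hx))
  have h2 : ContinuousAt (fun x : ℝ => Complex.exp (-(z θ u t) * x)) x := by
    apply Complex.continuous_exp.continuousAt.comp
    exact (continuous_const.mul Complex.continuous_ofReal).continuousAt
  exact ((Complex.continuous_ofReal.continuousAt.comp h1).mul
    (((continuous_const.mul Complex.continuous_ofReal).continuousAt).mul h2)).continuousWithinAt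

lemma hasDerivAt_F {ρ θ : ℝ} (hρ0 : 0 < ρ) (hρ1 : ρ < 1) (hθ : 0 < θ) (u t : ℝ) :
    HasDerivAt (fun t : ℝ => ∫ x in Ioi (0:ℝ), ((x ^ (-ρ) : ℝ) : ℂ) * Complex.exp (-(z θ u t) * x))
      ((u : ℂ) * Complex.I * ((1 - (ρ:ℂ)) / z θ u t) *
        ∫ x in Ioi (0:ℝ), ((x ^ (-ρ) : ℝ) : ℂ) * Complex.exp (-(z θ u t) * x)) t := by
  have main := hasDerivAt_integral_of_dominated_loc_of_deriv_le (μ := volume.restrict (Ioi 0))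
    (F := fun t x => ((x ^ (-ρ) : ℝ) : ℂ) * Complex.exp (-(z θ u t) * x))
    (F' := fun t x => ((x ^ (-ρ) : ℝ) : ℂ) *
      ((u : ℂ) * Complex.I * x * Complex.exp (-(z θ u t) * x)))
    (x₀ := t) (bound := fun x => |u| * (x ^ (1 - ρ) * Real.exp (-θ * x)))
    (Metric.ball_mem_nhds t one_pos)
    (Eventually.of_forall fun s =>
      ((contOn_aux (-ρ) s).aestronglyMeasurable measurableSet_Ioi))
    (integrableOn_cexp (by linarith) hθ u t)
    ((F'_continuousOn t).aestronglyMeasurable measurableSet_Ioi)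
    ?_ ?_ ?_
  · obtain ⟨-, hd⟩ := main
    have heq : ∫ x in Ioi (0:ℝ), ((x ^ (-ρ) : ℝ) : ℂ) *
        ((u : ℂ) * Complex.I * x * Complex.exp (-(z θ u t) * x))
        = (u : ℂ) * Complex.I *
          ∫ x in Ioi (0:ℝ), ((x ^ (1 - ρ) : ℝ) : ℂ) * Complex.exp (-(z θ u t) * x) := by
      rw [← integral_const_mul]
      refine setIntegral_congr_fun measurableSet_Ioi (fun x hx => ?_)
      have hr : (x : ℝ) ^ (1 - ρ) = x ^ (-ρ) * x := by
        have h := Real.rpow_add hx (-ρ) 1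
        rw [Real.rpow_one] at h
        rw [show (1 - ρ) = -ρ + 1 by ring, h]
      rw [hr]
      push_cast
      ring
    rw [heq, ibp hρ0 hρ1 hθ u t] at hd
    refine hd.congr_deriv ?_
    push_cast
    ring
  · filter_upwards [ae_restrict_mem measurableSet_Ioi] with x hx s _
    have hnorm : ‖((x ^ (-ρ) : ℝ) : ℂ) *
        ((u : ℂ) * Complex.I * x * Complex.exp (-(z θ u s) * x))‖
        = x ^ (-ρ) * (|u| * x * Real.exp (-θ * x)) := by
      simp only [norm_mul, Complex.norm_real, Real.norm_eq_abs,
        Complex.norm_I, Complex.norm_exp, mul_one]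
      have hre2 : (-(z θ u s) * (x:ℂ)).re = -θ * x := by simp [z]
      rw [hre2, _root_.abs_of_nonneg (Real.rpow_nonneg hx.le _),
        _root_.abs_of_nonneg (le_of_lt (show (0:ℝ) < x from hx))]
    rw [hnorm]
    have hr : (x : ℝ) ^ (1 - ρ) = x ^ (-ρ) * x := by
      have h := Real.rpow_add hx (-ρ) 1
      rw [Real.rpow_one] at h
      rw [show (1 - ρ) = -ρ + 1 by ring, h]
    rw [hr]
    exact le_of_eq (by ring)
  · exact ((integrableOn_rpow_exp (by linarith) hθ).const_mul _)
  · filter_upwards [ae_restrict_mem measurableSet_Ioi] with x hx s _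
    exact (hasDerivAt_cexp_z x s).const_mul _

lemma Fval {ρ θ : ℝ} (hρ0 : 0 < ρ) (hρ1 : ρ < 1) (hθ : 0 < θ) (u t : ℝ) :
    ∫ x in Ioi (0:ℝ), ((x ^ (-ρ) : ℝ) : ℂ) * Complex.exp (-(z θ u t) * x)
      = (Real.Gamma (1 - ρ) : ℂ) * (z θ u t) ^ ((ρ : ℂ) - 1) := by
  set F : ℝ → ℂ := fun t =>
    ∫ x in Ioi (0:ℝ), ((x ^ (-ρ) : ℝ) : ℂ) * Complex.exp (-(z θ u t) * x) with hF
  set G : ℝ → ℂ := fun t => (z θ u t) ^ ((1:ℂ) - ρ) * F t with hG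
  have hz : ∀ s : ℝ, HasDerivAt (fun s : ℝ => z θ u s) (-((u:ℂ) * Complex.I)) s := by
    intro s
    have h0 : HasDerivAt (fun s : ℝ => ((s:ℂ) * ((u:ℂ) * Complex.I))) ((u:ℂ) * Complex.I) s := by
      simpa using (Complex.ofRealCLM.hasDerivAt (x := s)).mul_const ((u:ℂ) * Complex.I)
    have h1 := h0.const_sub ((θ:ℝ):ℂ)
    have : (fun s : ℝ => ((θ:ℝ):ℂ) - (s:ℂ) * ((u:ℂ) * Complex.I)) = fun s : ℝ => z θ u s := by
      funext s; simp [z]; ring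
    rwa [this] at h1
  have hGderiv : ∀ s : ℝ, HasDerivAt G 0 s := by
    intro s
    have hz0 : z θ u s ≠ 0 := z_ne_zero hθ u s
    have hc : HasDerivAt (fun w : ℂ => w ^ ((1:ℂ) - ρ))
        (((1:ℂ) - ρ) * (z θ u s) ^ ((1:ℂ) - ρ - 1)) (z θ u s) :=
      (Complex.hasStrictDerivAt_cpow_const (z_slit hθ u s)).hasDerivAt
    have hp : HasDerivAt (fun s : ℝ => (z θ u s) ^ ((1:ℂ) - ρ))
        (((1:ℂ) - ρ) * (z θ u s) ^ ((1:ℂ) - ρ - 1) * -((u:ℂ) * Complex.I)) s :=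
      hc.comp s (hz s)
    have hd := hp.mul (hasDerivAt_F hρ0 hρ1 hθ u s)
    have hd' : HasDerivAt G _ s := hd
    refine hd'.congr_deriv ?_
    have hsub : (z θ u s) ^ ((1:ℂ) - ρ) = (z θ u s) ^ ((1:ℂ) - ρ - 1) * z θ u s := by
      nth_rewrite 1 [show (1:ℂ) - (ρ:ℂ) = ((1:ℂ) - (ρ:ℂ) - 1) + 1 by ring]
      rw [Complex.cpow_add _ _ hz0, Complex.cpow_one]
    have hdiv : z θ u s * ((1 - (ρ:ℂ)) / z θ u s) = 1 - (ρ:ℂ) := by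
      field_simp
    rw [hsub]
    linear_combination (z θ u s ^ ((1:ℂ) - (ρ:ℂ) - 1) * ((u:ℂ) * Complex.I) * F s) * hdiv
  have hconst : ∀ s : ℝ, G s = G 0 := fun s =>
    is_const_of_deriv_eq_zero (fun r => (hGderiv r).differentiableAt)
      (fun r => (hGderiv r).deriv) s 0
  have hθ' : (θ:ℂ) ≠ 0 := by exact_mod_cast hθ.ne'
  have hG0 : G 0 = (Real.Gamma (1 - ρ) : ℂ) := by
    show (z θ u 0) ^ ((1:ℂ) - ρ) * F 0 = _
    have hF0 : F 0 = (Real.Gamma (1 - ρ) : ℂ) * (θ : ℂ) ^ ((ρ : ℂ) - 1) :=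
      F_at_zero hρ0 hρ1 hθ u
    rw [hF0, z_zero, mul_comm ((Real.Gamma (1 - ρ) : ℂ)), ← mul_assoc,
      ← Complex.cpow_add _ _ hθ']
    have he : ((1:ℂ) - ρ) + ((ρ:ℂ) - 1) = 0 := by ring
    rw [he, Complex.cpow_zero, one_mul]
  have hzp : (z θ u t) ^ ((1:ℂ) - ρ) ≠ 0 := by
    intro h
    rw [Complex.cpow_eq_zero_iff] at h
    exact z_ne_zero hθ u t h.1
  have := (hconst t).trans hG0
  rw [hG] at this
  simp only at this
  have hFt : F t = (Real.Gamma (1 - ρ) : ℂ) * ((z θ u t) ^ ((1:ℂ) - ρ))⁻¹ := by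
    field_simp
    linear_combination this
  show F t = _
  rw [hFt]
  congr 1
  rw [← Complex.cpow_neg]
  congr 1
  ring

lemma norm_exp_I_sub_one_le (r : ℝ) : ‖Complex.exp ((r:ℂ) * Complex.I) - 1‖ ≤ |r| := by
  have h : Complex.exp ((r:ℂ) * Complex.I) - 1
      = ((Real.cos r - 1 : ℝ) : ℂ) + ((Real.sin r : ℝ) : ℂ) * Complex.I := by
    rw [Complex.exp_mul_I]
    push_cast
    ring
  rw [h, ← Real.sqrt_sq_eq_abs, Complex.norm_def]
  apply Real.sqrt_le_sqrt
  rw [Complex.normSq_add_mul_I]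
  have hc : Real.cos r = 2 * Real.cos (r/2)^2 - 1 := by
    have h2 := Real.cos_two_mul (r/2)
    rwa [show 2*(r/2) = r by ring] at h2
  have h1 : Real.sin (r/2)^2 ≤ (r/2)^2 := by
    have habs := Real.abs_sin_le_abs (x := r/2)
    calc Real.sin (r/2)^2 = |Real.sin (r/2)|^2 := (_root_.sq_abs _).symm
      _ ≤ |r/2|^2 := by gcongr <;> first | exact abs_nonneg _ | exact habs
      _ = (r/2)^2 := _root_.sq_abs _
  nlinarith [Real.sin_sq_add_cos_sq r, Real.sin_sq_add_cos_sq (r/2)]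

lemma exp_split {θ u : ℝ} (t x : ℝ) :
    Complex.exp (-(z θ u t) * x)
      = Complex.exp (-(θ:ℂ) * x) * Complex.exp (((t*u*x : ℝ) : ℂ) * Complex.I) := by
  rw [← Complex.exp_add]
  congr 1
  simp only [z]
  push_cast
  ring

lemma norm_Jf_le {ρ θ : ℝ} (u t : ℝ) {x : ℝ} (hx : 0 < x) :
    ‖(Complex.exp (-(z θ u t) * x) - Complex.exp (-(θ:ℂ) * x)) * ((x ^ (-ρ - 1) : ℝ) : ℂ)‖
      ≤ |t * u| * (x ^ (-ρ) * Real.exp (-θ * x)) := by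
  have hsplit : Complex.exp (-(z θ u t) * x) - Complex.exp (-(θ:ℂ) * x)
      = Complex.exp (-(θ:ℂ) * x) * (Complex.exp (((t*u*x : ℝ) : ℂ) * Complex.I) - 1) := by
    rw [mul_sub, mul_one, ← exp_split]
  have h1 : ‖Complex.exp (-(θ:ℂ) * x)‖ = Real.exp (-θ * x) := by
    rw [Complex.norm_exp]
    congr 1
    simp
  have h3 : x * x ^ (-ρ-1) = x ^ (-ρ) := by
    have h := Real.rpow_add hx (-ρ-1) 1
    rw [Real.rpow_one] at h
    rw [show (-ρ) = -ρ-1+1 by ring, h]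
    ring
  rw [hsplit, norm_mul, norm_mul, Complex.norm_real, Real.norm_eq_abs,
    _root_.abs_of_nonneg (Real.rpow_nonneg hx.le _), h1]
  calc Real.exp (-θ * x) * ‖Complex.exp (((t*u*x : ℝ) : ℂ) * Complex.I) - 1‖ * x ^ (-ρ-1)
      ≤ Real.exp (-θ * x) * |t*u*x| * x ^ (-ρ-1) := by
        gcongr
        exact norm_exp_I_sub_one_le _
    _ = |t * u| * (x ^ (-ρ) * Real.exp (-θ * x)) := by
        rw [abs_mul (t*u) x, _root_.abs_of_nonneg hx.le, ← h3]
        ring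

lemma Jf_contOn {ρ θ : ℝ} (u t : ℝ) :
    ContinuousOn (fun x : ℝ =>
      (Complex.exp (-(z θ u t) * x) - Complex.exp (-(θ:ℂ) * x)) * ((x ^ (-ρ - 1) : ℝ) : ℂ))
      (Ioi 0) := by
  intro x hx
  have h1 : ContinuousAt (fun x : ℝ => x ^ (-ρ - 1)) x :=
    Real.continuousAt_rpow_const x _ (Or.inl (ne_of_gt hx))
  have h2 : ContinuousAt (fun x : ℝ => Complex.exp (-(z θ u t) * x)) x :=
    Complex.continuous_exp.continuousAt.comp
      ((continuous_const.mul Complex.continuous_ofReal).continuousAt)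
  have h3 : ContinuousAt (fun x : ℝ => Complex.exp (-(θ:ℂ) * x)) x :=
    Complex.continuous_exp.continuousAt.comp
      ((continuous_const.mul Complex.continuous_ofReal).continuousAt)
  exact ((h2.sub h3).mul (Complex.continuous_ofReal.continuousAt.comp h1)).continuousWithinAt

lemma Jf_integrableOn {ρ θ : ℝ} (hρ0 : 0 < ρ) (hρ1 : ρ < 1) (hθ : 0 < θ) (u t : ℝ) :
    IntegrableOn (fun x : ℝ =>
      (Complex.exp (-(z θ u t) * x) - Complex.exp (-(θ:ℂ) * x)) * ((x ^ (-ρ - 1) : ℝ) : ℂ))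
      (Ioi 0) := by
  refine ((integrableOn_rpow_exp (by linarith : (-1:ℝ) < -ρ) hθ).const_mul (|t*u|)).mono'
    ((Jf_contOn u t).aestronglyMeasurable measurableSet_Ioi) ?_
  filter_upwards [ae_restrict_mem measurableSet_Ioi] with x hx
  exact norm_Jf_le u t hx

lemma Jval {ρ θ : ℝ} (hρ0 : 0 < ρ) (hρ1 : ρ < 1) (hθ : 0 < θ) (u t : ℝ) :
    ∫ x in Ioi (0:ℝ),
      (Complex.exp (-(z θ u t) * x) - Complex.exp (-(θ:ℂ) * x)) * ((x ^ (-ρ - 1) : ℝ) : ℂ)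
      = (Real.Gamma (-ρ) : ℂ) * ((z θ u t) ^ (ρ:ℂ) - (θ:ℂ) ^ (ρ:ℂ)) := by
  set J : ℝ → ℂ := fun t => ∫ x in Ioi (0:ℝ),
    (Complex.exp (-(z θ u t) * x) - Complex.exp (-(θ:ℂ) * x)) * ((x ^ (-ρ - 1) : ℝ) : ℂ) with hJ
  set K : ℝ → ℂ := fun t => (Real.Gamma (-ρ) : ℂ) * ((z θ u t) ^ (ρ:ℂ) - (θ:ℂ) ^ (ρ:ℂ)) with hK
  have hΓ : Real.Gamma (1 - ρ) = -ρ * Real.Gamma (-ρ) := by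
    have h := Real.Gamma_add_one (s := -ρ) (by linarith)
    rwa [show -ρ + 1 = 1 - ρ by ring] at h
  have hz : ∀ s : ℝ, HasDerivAt (fun s : ℝ => z θ u s) (-((u:ℂ) * Complex.I)) s := by
    intro s
    have h0 : HasDerivAt (fun s : ℝ => ((s:ℂ) * ((u:ℂ) * Complex.I))) ((u:ℂ) * Complex.I) s := by
      simpa using (Complex.ofRealCLM.hasDerivAt (x := s)).mul_const ((u:ℂ) * Complex.I)
    have h1 := h0.const_sub ((θ:ℝ):ℂ)
    have he : (fun s : ℝ => ((θ:ℝ):ℂ) - (s:ℂ) * ((u:ℂ) * Complex.I)) = fun s : ℝ => z θ u s := by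
      funext s; simp [z]; ring
    rwa [he] at h1
  have hJderiv : ∀ s : ℝ, HasDerivAt J
      ((u:ℂ) * Complex.I * ((Real.Gamma (1 - ρ) : ℂ) * (z θ u s) ^ ((ρ:ℂ) - 1))) s := by
    intro s
    have main := hasDerivAt_integral_of_dominated_loc_of_deriv_le (μ := volume.restrict (Ioi 0))
      (F := fun t x => (Complex.exp (-(z θ u t) * x) - Complex.exp (-(θ:ℂ) * x)) *
        ((x ^ (-ρ - 1) : ℝ) : ℂ))
      (F' := fun t x => ((u : ℂ) * Complex.I * x * Complex.exp (-(z θ u t) * x)) *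
        ((x ^ (-ρ - 1) : ℝ) : ℂ))
      (x₀ := s) (bound := fun x => |u| * (x ^ (-ρ) * Real.exp (-θ * x)))
      (Metric.ball_mem_nhds s one_pos)
      (Eventually.of_forall fun r =>
        ((Jf_contOn u r).aestronglyMeasurable measurableSet_Ioi))
      (Jf_integrableOn hρ0 hρ1 hθ u s)
      ?_ ?_ ?_ ?_
    · obtain ⟨-, hd⟩ := main
      have heq : ∫ x in Ioi (0:ℝ), ((u : ℂ) * Complex.I * x * Complex.exp (-(z θ u s) * x)) *
          ((x ^ (-ρ - 1) : ℝ) : ℂ)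
          = (u:ℂ) * Complex.I *
            ∫ x in Ioi (0:ℝ), ((x ^ (-ρ) : ℝ) : ℂ) * Complex.exp (-(z θ u s) * x) := by
        rw [← integral_const_mul]
        refine setIntegral_congr_fun measurableSet_Ioi (fun x hx => ?_)
        have h3 : x * x ^ (-ρ-1) = x ^ (-ρ) := by
          have h := Real.rpow_add hx (-ρ-1) 1
          rw [Real.rpow_one] at h
          rw [show (-ρ) = -ρ-1+1 by ring, h]
          ring
        rw [← h3]
        push_cast
        ring
      rw [heq, Fval hρ0 hρ1 hθ u s] at hd
      exact hd
    · -- measurability of F' s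
      refine (ContinuousOn.aestronglyMeasurable ?_ measurableSet_Ioi)
      intro x hx
      have h1 : ContinuousAt (fun x : ℝ => x ^ (-ρ - 1)) x :=
        Real.continuousAt_rpow_const x _ (Or.inl (ne_of_gt hx))
      have h2 : ContinuousAt (fun x : ℝ => Complex.exp (-(z θ u s) * x)) x :=
        Complex.continuous_exp.continuousAt.comp
          ((continuous_const.mul Complex.continuous_ofReal).continuousAt)
      exact (((continuous_const.mul Complex.continuous_ofReal).continuousAt.mul h2).mul
        (Complex.continuous_ofReal.continuousAt.comp h1)).continuousWithinAt
    · -- bound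
      filter_upwards [ae_restrict_mem measurableSet_Ioi] with x hx r _
      have hnorm : ‖((u : ℂ) * Complex.I * x * Complex.exp (-(z θ u r) * x)) *
          ((x ^ (-ρ - 1) : ℝ) : ℂ)‖ = |u| * x * Real.exp (-θ * x) * x ^ (-ρ - 1) := by
        simp only [norm_mul, Complex.norm_real, Real.norm_eq_abs,
          Complex.norm_I, Complex.norm_exp, mul_one]
        have hre2 : (-(z θ u r) * (x:ℂ)).re = -θ * x := by simp [z]
        rw [hre2, _root_.abs_of_nonneg (Real.rpow_nonneg hx.le _),
        _root_.abs_of_nonneg (le_of_lt (show (0:ℝ) < x from hx))]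
      rw [hnorm]
      have h3 : x * x ^ (-ρ-1) = x ^ (-ρ) := by
        have h := Real.rpow_add hx (-ρ-1) 1
        rw [Real.rpow_one] at h
        rw [show (-ρ) = -ρ-1+1 by ring, h]
        ring
      rw [← h3]
      exact le_of_eq (by ring)
    · exact (integrableOn_rpow_exp (by linarith : (-1:ℝ) < -ρ) hθ).const_mul _
    · -- differentiability
      filter_upwards [ae_restrict_mem measurableSet_Ioi] with x hx r _
      exact ((hasDerivAt_cexp_z x r).sub_const _).mul_const _
  have hKderiv : ∀ s : ℝ, HasDerivAt K
      ((Real.Gamma (-ρ) : ℂ) * ((ρ:ℂ) * (z θ u s) ^ ((ρ:ℂ) - 1) * -((u:ℂ) * Complex.I))) s := by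
    intro s
    have hc : HasDerivAt (fun w : ℂ => w ^ (ρ:ℂ))
        ((ρ:ℂ) * (z θ u s) ^ ((ρ:ℂ) - 1)) (z θ u s) :=
      (Complex.hasStrictDerivAt_cpow_const (z_slit hθ u s)).hasDerivAt
    have hp : HasDerivAt (fun s : ℝ => (z θ u s) ^ (ρ:ℂ))
        ((ρ:ℂ) * (z θ u s) ^ ((ρ:ℂ) - 1) * -((u:ℂ) * Complex.I)) s :=
      hc.comp s (hz s)
    exact ((hp.sub_const ((θ:ℂ) ^ (ρ:ℂ))).const_mul _)
  have hDderiv : ∀ s : ℝ, HasDerivAt (fun s => J s - K s) 0 s := by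
    intro s
    have := (hJderiv s).sub (hKderiv s)
    have hd' : HasDerivAt (fun s => J s - K s) _ s := this
    refine hd'.congr_deriv ?_
    push_cast [hΓ]
    ring
  have hconst : ∀ s : ℝ, J s - K s = J 0 - K 0 := fun s =>
    is_const_of_deriv_eq_zero (fun r => (hDderiv r).differentiableAt)
      (fun r => (hDderiv r).deriv) s 0
  have hJ0 : J 0 = 0 := by
    show (∫ x in Ioi (0:ℝ),
      (Complex.exp (-(z θ u 0) * x) - Complex.exp (-(θ:ℂ) * x)) * ((x ^ (-ρ - 1) : ℝ) : ℂ)) = 0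
    rw [z_zero]
    simp
  have hK0 : K 0 = 0 := by
    show (Real.Gamma (-ρ) : ℂ) * ((z θ u 0) ^ (ρ:ℂ) - (θ:ℂ) ^ (ρ:ℂ)) = 0
    rw [z_zero]
    simp
  have := hconst t
  rw [hJ0, hK0, sub_zero] at this
  exact sub_eq_zero.mp this

end TSaux

end TSauxSection

open TSaux in
/-- Characteristic-exponent identity for the Lévy density of the tempered stable subordinator:
for `α ∈ (0,2)`, `θ > 0`, `c > 0` and `u ∈ ℝ`, the integral
`∫_{(0,∞)} (e^{iux} − 1) · (−c e^{−θx}) / (Γ(−α/2) · x^{α/2+1}) dx` converges and equals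
`−c·((θ − iu)^{α/2} − θ^{α/2})` (principal complex power). -/
theorem tempered_stable_characteristic_exponent
    (α θ c u : ℝ) (hα : α ∈ Set.Ioo (0 : ℝ) 2) (hθ : 0 < θ) (hc : 0 < c) :
    IntegrableOn
      (fun x : ℝ => (Complex.exp (Complex.I * u * x) - 1) *
        (((-c * Real.exp (-θ * x)) / (Real.Gamma (-α / 2) * x ^ (α / 2 + 1)) : ℝ) : ℂ))
      (Set.Ioi 0) ∧
    (∫ x in Set.Ioi (0 : ℝ), (Complex.exp (Complex.I * u * x) - 1) *
        (((-c * Real.exp (-θ * x)) / (Real.Gamma (-α / 2) * x ^ (α / 2 + 1)) : ℝ) : ℂ))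
      = -(c : ℂ) * (((θ : ℂ) - Complex.I * u) ^ ((α : ℂ) / 2) - (θ : ℂ) ^ ((α : ℂ) / 2)) := by
  set ρ : ℝ := α / 2 with hρ
  have hρ0 : 0 < ρ := by simp only [hρ]; linarith [hα.1]
  have hρ1 : ρ < 1 := by simp only [hρ]; linarith [hα.2]
  have hΓne : Real.Gamma (-ρ) ≠ 0 := by
    apply Real.Gamma_ne_zero
    intro m
    rcases m with _ | m
    · push_cast; intro h; linarith
    · push_cast; intro h
      have hm : (0:ℝ) ≤ (m:ℝ) := Nat.cast_nonneg m
      linarith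
  have hΓalpha : Real.Gamma (-α / 2) = Real.Gamma (-ρ) := by rw [hρ, neg_div]
  -- pointwise identification of the integrand
  have hpt : ∀ x ∈ Set.Ioi (0:ℝ),
      (Complex.exp (Complex.I * u * x) - 1) *
        (((-c * Real.exp (-θ * x)) / (Real.Gamma (-α / 2) * x ^ (α / 2 + 1)) : ℝ) : ℂ)
      = ((-c : ℂ) / (Real.Gamma (-ρ) : ℂ)) *
        ((Complex.exp (-(z θ u 1) * x) - Complex.exp (-(θ:ℂ) * x)) *
          ((x ^ (-ρ - 1) : ℝ) : ℂ)) := by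
    intro x hx
    have hxpos : (0:ℝ) < x := hx
    have e3 : Complex.exp (-(z θ u 1) * x)
        = Complex.exp (Complex.I * u * x) * Complex.exp (-(θ:ℂ) * x) := by
      rw [← Complex.exp_add]
      congr 1
      simp only [z]
      push_cast
      ring
    have e1 : ((Real.exp (-θ * x) : ℝ) : ℂ) = Complex.exp (-(θ:ℂ) * x) := by
      rw [Complex.ofReal_exp]
      norm_cast
    have e2 : (x ^ (-ρ - 1) : ℝ) = (x ^ (ρ + 1) : ℝ)⁻¹ := by
      rw [show -ρ - 1 = -(ρ + 1) by ring, Real.rpow_neg hxpos.le]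
    have hxρ : (x ^ (ρ + 1) : ℝ) ≠ 0 := by positivity
    have hx1 : ((x ^ (ρ + 1) : ℝ) : ℂ) ≠ 0 := by exact_mod_cast hxρ
    have hΓC : (Real.Gamma (-ρ) : ℂ) ≠ 0 := by exact_mod_cast hΓne
    rw [e3, e2, hΓalpha]
    push_cast
    ring
  have hInt : IntegrableOn
      (fun x : ℝ => (Complex.exp (Complex.I * u * x) - 1) *
        (((-c * Real.exp (-θ * x)) / (Real.Gamma (-α / 2) * x ^ (α / 2 + 1)) : ℝ) : ℂ))
      (Set.Ioi 0) := by
    have hI2 : IntegrableOn (fun x : ℝ => ((-c : ℂ) / (Real.Gamma (-ρ) : ℂ)) *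
        ((Complex.exp (-(z θ u 1) * x) - Complex.exp (-(θ:ℂ) * x)) *
          ((x ^ (-ρ - 1) : ℝ) : ℂ))) (Set.Ioi 0) :=
      (Jf_integrableOn hρ0 hρ1 hθ u 1).const_mul _
    exact hI2.congr_fun (fun x hx => (hpt x hx).symm) measurableSet_Ioi
  refine ⟨hInt, ?_⟩
  rw [setIntegral_congr_fun measurableSet_Ioi hpt, integral_const_mul, Jval hρ0 hρ1 hθ u 1]
  have hz1 : z θ u 1 = (θ : ℂ) - Complex.I * u := by
    simp only [z]
    push_cast
    ring
  have hexp : ((ρ : ℝ) : ℂ) = (α : ℂ) / 2 := by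
    rw [hρ]
    push_cast
    ring
  rw [hz1, hexp]
  have hΓC : (Real.Gamma (-ρ) : ℂ) ≠ 0 := by exact_mod_cast hΓne
  field_simp
end

section
/- Let N be a positive integer, T a nonnegative real random variable with E[T²] < ∞, and G = (G_1, …, G_N) a random vector independent of T, with each G_n square-integrable and E[G_n] = 0. Let μ, β, σ ∈ ℝ^N and define Y_n = μ_n + β_n T + σ_n √T·G_n for n = 1,…,N. Then for all k, n, Cov(Y_k, Y_n) = σ_k σ_n Cov(G_k, G_n)·E[T] + β_k β_n·Var(T). -/
open MeasureTheory ProbabilityTheory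

/-- The covariance of two real random variables `X`, `Y` on a measure space. -/
noncomputable def cov {Ω : Type*} [MeasurableSpace Ω] (X Y : Ω → ℝ)
    (P : Measure Ω) : ℝ :=
  ∫ ω, (X ω - ∫ ω', X ω' ∂P) * (Y ω - ∫ ω', Y ω' ∂P) ∂P

lemma l2_mul_int' {Ω : Type*} [MeasurableSpace Ω] {P : Measure Ω} {f g : Ω → ℝ}
    (hf : MemLp f 2 P) (hg : MemLp g 2 P) :
    Integrable (fun ω => f ω * g ω) P := by
  have h : MemLp (f • g) 1 P := hg.smul hf
  exact memLp_one_iff_integrable.mp h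

/-- Covariance structure of the multivariate time-changed model `Y_n = μ_n + β_n T + σ_n √T·G_n`
with `T ≥ 0` square-integrable, `G = (G_1,…,G_N)` a centered square-integrable random vector
independent of `T`: `Cov(Y_k, Y_n) = σ_k σ_n Cov(G_k, G_n)·E[T] + β_k β_n·Var(T)`. -/
theorem timeChanged_BM_covariance
    {Ω : Type*} [MeasurableSpace Ω] (P : Measure Ω) [IsProbabilityMeasure P]
    (N : ℕ) (hN : 0 < N)
    (T : Ω → ℝ) (G : Ω → (Fin N → ℝ)) (hTm : Measurable T) (hGm : Measurable G)
    (hTnn : ∀ ω, 0 ≤ T ω) (hT2 : MemLp T 2 P)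
    (hG2 : ∀ n, MemLp (fun ω => G ω n) 2 P)
    (hGmean : ∀ n, (∫ ω, G ω n ∂P) = 0)
    (hindep : IndepFun G T P)
    (μ β σ : Fin N → ℝ) :
    ∀ k n : Fin N,
      cov (fun ω => μ k + β k * T ω + σ k * Real.sqrt (T ω) * G ω k)
          (fun ω => μ n + β n * T ω + σ n * Real.sqrt (T ω) * G ω n) P
        = σ k * σ n * cov (fun ω => G ω k) (fun ω => G ω n) P * (∫ ω, T ω ∂P)
          + β k * β n * variance T P := by
  intro k n
  set m := ∫ ω, T ω ∂P with hm
  have hsqm : Measurable fun ω => Real.sqrt (T ω) :=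
    Real.continuous_sqrt.measurable.comp hTm
  have hTint : Integrable T P := hT2.integrable one_le_two
  have hGint : ∀ j, Integrable (fun ω => G ω j) P := fun j => (hG2 j).integrable one_le_two
  -- √T is in L²
  have hsqrt2 : MemLp (fun ω => Real.sqrt (T ω)) 2 P := by
    rw [memLp_two_iff_integrable_sq hsqm.aestronglyMeasurable]
    exact hTint.congr (Filter.Eventually.of_forall fun ω =>
      (Real.sq_sqrt (hTnn ω)).symm)
  have hTm2 : MemLp (fun ω => T ω - m) 2 P := hT2.sub (memLp_const m)
  -- √T·G_j is integrable with integral 0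
  have hsTG_int : ∀ j, Integrable (fun ω => Real.sqrt (T ω) * G ω j) P :=
    fun j => l2_mul_int' hsqrt2 (hG2 j)
  have hindep' : ∀ (φ : ℝ → ℝ) (ψ : (Fin N → ℝ) → ℝ), Measurable φ → Measurable ψ →
      IndepFun (fun ω => φ (T ω)) (fun ω => ψ (G ω)) P :=
    fun φ ψ hφ hψ => hindep.symm.comp hφ hψ
  have hsTG_zero : ∀ j, (∫ ω, Real.sqrt (T ω) * G ω j ∂P) = 0 := by
    intro j
    have hI : IndepFun (fun ω => Real.sqrt (T ω)) (fun ω => G ω j) P :=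
      hindep' Real.sqrt (fun v => v j) Real.continuous_sqrt.measurable (measurable_pi_apply j)
    have := hI.integral_fun_mul_eq_mul_integral (hsqrt2.integrable one_le_two).aestronglyMeasurable (hGint j).aestronglyMeasurable
    simpa [Pi.mul_apply, hGmean j] using this
  -- means of the Y's
  have hmean : ∀ j : Fin N,
      (∫ ω, (μ j + β j * T ω + σ j * Real.sqrt (T ω) * G ω j) ∂P) = μ j + β j * m := by
    intro j
    have h1 : Integrable (fun ω => μ j + β j * T ω) P :=
      (integrable_const _).add (hTint.const_mul _)
    have h2 : Integrable (fun ω => σ j * (Real.sqrt (T ω) * G ω j)) P :=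
      (hsTG_int j).const_mul _
    simp_rw [mul_assoc]
    rw [integral_add h1 h2,
        integral_add (integrable_const (μ j)) (hTint.const_mul (β j)),
        integral_const_mul, integral_const_mul, hsTG_zero j]
    simp [hm]
  -- the four pieces
  have int1 : Integrable (fun ω => (T ω - m) ^ 2) P := hTm2.integrable_sq
  have intTS : Integrable (fun ω => (T ω - m) * Real.sqrt (T ω)) P :=
    l2_mul_int' hTm2 hsqrt2
  have hcrossI : ∀ j : Fin N,
      IndepFun (fun ω => (T ω - m) * Real.sqrt (T ω)) (fun ω => G ω j) P :=
    fun j => hindep' (fun x => (x - m) * Real.sqrt x) (fun v => v j)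
      ((measurable_id.sub measurable_const).mul Real.continuous_sqrt.measurable)
      (measurable_pi_apply j)
  have int2 : ∀ j, Integrable (fun ω => (T ω - m) * Real.sqrt (T ω) * G ω j) P := by
    intro j
    have := (hcrossI j).integrable_mul intTS (hGint j)
    exact this
  have int2z : ∀ j, (∫ ω, (T ω - m) * Real.sqrt (T ω) * G ω j ∂P) = 0 := by
    intro j
    have := (hcrossI j).integral_fun_mul_eq_mul_integral intTS.aestronglyMeasurable (hGint j).aestronglyMeasurable
    simpa [Pi.mul_apply, hGmean j] using this
  have intGG : Integrable (fun ω => G ω k * G ω n) P := l2_mul_int' (hG2 k) (hG2 n)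
  have hTGGI : IndepFun T (fun ω => G ω k * G ω n) P :=
    hindep' id (fun v => v k * v n) measurable_id
      ((measurable_pi_apply k).mul (measurable_pi_apply n))
  have int3 : Integrable (fun ω => T ω * (G ω k * G ω n)) P := by
    have := hTGGI.integrable_mul hTint intGG
    exact this
  have int3v : (∫ ω, T ω * (G ω k * G ω n) ∂P) = m * ∫ ω, G ω k * G ω n ∂P := by
    have := hTGGI.integral_fun_mul_eq_mul_integral hTint.aestronglyMeasurable intGG.aestronglyMeasurable
    simpa [Pi.mul_apply, hm] using this
  -- variance
  have hvar : variance T P = ∫ ω, (T ω - m) ^ 2 ∂P := by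
    rw [variance_eq_integral hTm.aemeasurable]
  -- main computation
  simp only [cov, hmean k, hmean n]
  have hexp : ∀ ω : Ω,
      (μ k + β k * T ω + σ k * Real.sqrt (T ω) * G ω k - (μ k + β k * m)) *
        (μ n + β n * T ω + σ n * Real.sqrt (T ω) * G ω n - (μ n + β n * m))
      = β k * β n * ((T ω - m) ^ 2)
        + β k * σ n * ((T ω - m) * Real.sqrt (T ω) * G ω n)
        + σ k * β n * ((T ω - m) * Real.sqrt (T ω) * G ω k)
        + σ k * σ n * (T ω * (G ω k * G ω n)) := by
    intro ω
    have h : Real.sqrt (T ω) * Real.sqrt (T ω) = T ω := Real.mul_self_sqrt (hTnn ω)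
    linear_combination σ k * σ n * G ω k * G ω n * h
  simp_rw [hexp]
  have i1 : Integrable (fun ω => β k * β n * (T ω - m) ^ 2) P := int1.const_mul _
  have i2 : Integrable (fun ω => β k * σ n * ((T ω - m) * Real.sqrt (T ω) * G ω n)) P :=
    (int2 n).const_mul _
  have i3 : Integrable (fun ω => σ k * β n * ((T ω - m) * Real.sqrt (T ω) * G ω k)) P :=
    (int2 k).const_mul _
  have i4 : Integrable (fun ω => σ k * σ n * (T ω * (G ω k * G ω n))) P := int3.const_mul _
  have i12 : Integrable (fun ω => β k * β n * (T ω - m) ^ 2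
      + β k * σ n * ((T ω - m) * Real.sqrt (T ω) * G ω n)) P := i1.add i2
  have i123 : Integrable (fun ω => β k * β n * (T ω - m) ^ 2
      + β k * σ n * ((T ω - m) * Real.sqrt (T ω) * G ω n)
      + σ k * β n * ((T ω - m) * Real.sqrt (T ω) * G ω k)) P := i12.add i3
  rw [integral_add i123 i4, integral_add i12 i3, integral_add i1 i2,
      integral_const_mul, integral_const_mul, integral_const_mul, integral_const_mul,
      int2z k, int2z n, int3v, hvar]
  simp only [hGmean, sub_zero]
  ring
end

section
/- Let T be a nonnegative real random variable and Z a standard normal random variable independent of T. Let μ, β, σ ∈ ℝ. Then for every u ∈ ℝ, E[e^{iu(μ + βT + σ√T·Z)}] = e^{iuμ}·E[e^{(iuβ − σ²u²/2)T}], where both expectations are complex-valued integrals (the integrands are bounded since Re(iuβ − σ²u²/2) ≤ 0). -/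
open MeasureTheory ProbabilityTheory
open scoped ENNReal NNReal Real

set_option maxHeartbeats 1000000

lemma gaussian_cexp_integral (a : ℝ) :
    ∫ z, Complex.exp (Complex.I * a * z) ∂(gaussianReal 0 1) = Complex.exp (-(a^2)/2) := by
  rw [gaussianReal_of_var_ne_zero 0 one_ne_zero]
  have hpdf : (gaussianPDF 0 1) = fun x => ((Real.toNNReal (gaussianPDFReal 0 1 x) : ℝ≥0) : ℝ≥0∞) := by
    ext x; simp [gaussianPDF, ENNReal.ofReal]
  rw [hpdf, integral_withDensity_eq_integral_smul
    (by exact (measurable_gaussianPDFReal 0 1).real_toNNReal) _]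
  have hb : (-(1/2) : ℂ).re < 0 := by norm_num
  have key := integral_cexp_quadratic hb (Complex.I * a) 0
  have heq : ∀ x : ℝ, Real.toNNReal (gaussianPDFReal 0 1 x) • Complex.exp (Complex.I * a * x)
      = ((Real.sqrt (2 * Real.pi) : ℝ) : ℂ)⁻¹ * Complex.exp (-(1/2) * x^2 + (Complex.I * a) * x + 0) := by
    intro x
    rw [NNReal.smul_def, Real.coe_toNNReal _ (gaussianPDFReal_nonneg 0 1 x),
      gaussianPDFReal_def, Complex.real_smul]
    simp only [NNReal.coe_one, mul_one, sub_zero]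
    push_cast [Complex.ofReal_exp]
    rw [mul_assoc, ← Complex.exp_add]
    congr 2
    ring
  simp only [heq]
  rw [integral_const_mul, key]
  have h2 : ((Real.pi : ℂ) / - -(1/2)) = ((2 * Real.pi : ℝ) : ℂ) := by push_cast; ring
  rw [h2]
  have h3 : ((2 * Real.pi : ℝ) : ℂ) ^ (1/2 : ℂ) = ((Real.sqrt (2 * Real.pi) : ℝ) : ℂ) := by
    rw [Real.sqrt_eq_rpow, Complex.ofReal_cpow (by positivity)]
    norm_num
  rw [h3, ← mul_assoc, inv_mul_cancel₀
    (Complex.ofReal_ne_zero.mpr (by positivity : (0:ℝ) < Real.sqrt (2 * Real.pi)).ne'), one_mul]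
  congr 1
  have : (Complex.I * a)^2 = -((a:ℂ)^2) := by rw [mul_pow, Complex.I_sq]; ring
  rw [this]
  ring


/-- Characteristic function of a time-changed Brownian marginal: if `T ≥ 0` and `Z` is a
standard normal independent of `T`, then for every `u ∈ ℝ`,
`E[e^{iu(μ + βT + σ√T·Z)}] = e^{iuμ}·E[e^{(iuβ − σ²u²/2)T}]`. -/
theorem timeChanged_BM_characteristic_function
    {Ω : Type*} [MeasurableSpace Ω] (P : Measure Ω) [IsProbabilityMeasure P]
    (T Z : Ω → ℝ) (hTm : Measurable T) (hZm : Measurable Z)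
    (hTnn : ∀ ω, 0 ≤ T ω)
    (hZlaw : P.map Z = gaussianReal 0 1)
    (hindep : IndepFun Z T P)
    (μ β σ : ℝ) :
    ∀ u : ℝ,
      (∫ ω, Complex.exp (Complex.I * u * (μ + β * T ω + σ * Real.sqrt (T ω) * Z ω)) ∂P)
        = Complex.exp (Complex.I * u * μ) *
          ∫ ω, Complex.exp ((Complex.I * u * β - (σ : ℂ) ^ 2 * u ^ 2 / 2) * T ω) ∂P := by
  intro u
  set f : ℝ × ℝ → ℂ := fun p =>
    Complex.exp (Complex.I * u * (β * p.1 + σ * Real.sqrt p.1 * p.2)) with hf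
  have hfcont : Continuous f := by fun_prop
  have hnorm : ∀ p : ℝ × ℝ, ‖f p‖ = 1 := by
    intro p
    have : Complex.I * u * (β * p.1 + σ * Real.sqrt p.1 * p.2)
        = ((u * (β * p.1 + σ * Real.sqrt p.1 * p.2) : ℝ) : ℂ) * Complex.I := by
      push_cast; ring
    show ‖Complex.exp (Complex.I * u * (β * p.1 + σ * Real.sqrt p.1 * p.2))‖ = 1
    rw [this, Complex.norm_exp_ofReal_mul_I]
  -- split off the constant
  have hsplit : ∀ ω : Ω, Complex.exp (Complex.I * u * (μ + β * T ω + σ * Real.sqrt (T ω) * Z ω))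
      = Complex.exp (Complex.I * u * μ) * f (T ω, Z ω) := by
    intro ω
    rw [hf, ← Complex.exp_add]
    congr 1
    push_cast
    ring
  simp only [hsplit]
  rw [integral_const_mul]
  congr 1
  -- independence: law of the pair
  have hTZ : P.map (fun ω => (T ω, Z ω)) = (P.map T).prod (P.map Z) :=
    (indepFun_iff_map_prod_eq_prod_map_map hTm.aemeasurable hZm.aemeasurable).mp hindep.symm
  have hint : Integrable f ((P.map T).prod (P.map Z)) := by
    refine (integrable_const (1:ℝ)).mono' hfcont.aestronglyMeasurable ?_
    exact Filter.Eventually.of_forall fun p => (hnorm p).le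
  have h1 : ∫ ω, f (T ω, Z ω) ∂P = ∫ p, f p ∂((P.map T).prod (P.map Z)) := by
    rw [← hTZ, integral_map (hTm.prodMk hZm).aemeasurable hfcont.aestronglyMeasurable]
  rw [h1, integral_prod f hint, hZlaw]
  have hinner : ∀ t : ℝ, 0 ≤ t →
      ∫ z, f (t, z) ∂(gaussianReal 0 1)
        = Complex.exp ((Complex.I * u * β - (σ : ℂ) ^ 2 * u ^ 2 / 2) * t) := by
    intro t ht
    have hfe : ∀ z : ℝ, f (t, z) = Complex.exp (Complex.I * u * (β * t))
        * Complex.exp (Complex.I * ((u * σ * Real.sqrt t : ℝ) : ℂ) * z) := by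
      intro z
      show Complex.exp (Complex.I * u * (β * (t:ℝ) + σ * Real.sqrt t * z)) = _
      rw [← Complex.exp_add]
      congr 1
      push_cast
      ring
    simp only [hfe]
    rw [integral_const_mul, gaussian_cexp_integral (u * σ * Real.sqrt t), ← Complex.exp_add]
    congr 1
    have hsq : (Real.sqrt t : ℂ) ^ 2 = (t : ℂ) := by
      rw [← Complex.ofReal_pow, Real.sq_sqrt ht]
    push_cast
    rw [mul_pow, mul_pow, hsq]
    ring
  have hae : ∀ᵐ t ∂(P.map T), 0 ≤ t := by
    rw [ae_map_iff hTm.aemeasurable (measurableSet_Ici : MeasurableSet (Set.Ici (0:ℝ)))]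
    exact Filter.Eventually.of_forall hTnn
  rw [integral_congr_ae (hae.mono fun t ht => hinner t ht)]
  rw [integral_map hTm.aemeasurable]
  exact (Complex.continuous_exp.comp (continuous_const.mul Complex.continuous_ofReal)).aestronglyMeasurable
end

section
/- Let t > 0, α ∈ (0,2), θ > 0, μ, β ∈ ℝ, σ > 0. Let T be a nonnegative real random variable such that for every complex w with Re(w) ≤ 0, E[e^{wT}] = exp(−t·((θ − w)^{α/2} − θ^{α/2})) (principal complex power). Let Z be a standard normal random variable independent of T and set X = μt + βT + σ√T·Z. Then for every u ∈ ℝ, E[e^{iuX}] = exp(iμut − t·((θ − iβu + σ²u²/2)^{α/2} − θ^{α/2})). -/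
open MeasureTheory ProbabilityTheory Complex Real
open scoped NNReal ENNReal

lemma gauss_char (a : ℝ) :
    ∫ z : ℝ, Complex.exp (Complex.I * a * z) ∂(gaussianReal 0 1) = Complex.exp (-(a:ℂ)^2 / 2) := by
  rw [gaussianReal_of_var_ne_zero 0 one_ne_zero]
  have hpdf : gaussianPDF 0 1 = fun x => ((Real.toNNReal (gaussianPDFReal 0 1 x) : ℝ≥0) : ℝ≥0∞) := by
    ext x; simp [gaussianPDF, ENNReal.ofReal]
  rw [hpdf, integral_withDensity_eq_integral_smul
    ((measurable_gaussianPDFReal 0 1).real_toNNReal)]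
  have hpos : (0:ℝ) < Real.sqrt (2 * π) := Real.sqrt_pos.mpr (by positivity)
  have h1 : ∀ x : ℝ, (Real.toNNReal (gaussianPDFReal 0 1 x)) • Complex.exp (Complex.I * a * x)
      = ((Real.sqrt (2 * π) : ℂ))⁻¹ *
        Complex.exp ((-(1/2) : ℂ) * (x:ℂ) ^ 2 + (Complex.I * a) * x + 0) := by
    intro x
    have h2 : ((gaussianPDFReal 0 1 x).toNNReal : ℝ) = gaussianPDFReal 0 1 x :=
      Real.coe_toNNReal _ (gaussianPDFReal_nonneg 0 1 x)
    simp only [NNReal.smul_def, Complex.real_smul]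
    have h3 : ((Real.toNNReal (gaussianPDFReal 0 1 x) : ℝ) : ℂ) = ((gaussianPDFReal 0 1 x : ℝ) : ℂ) := by
      rw [h2]
    rw [h3]
    simp only [gaussianPDFReal, NNReal.coe_one, mul_one, sub_zero, add_zero]
    push_cast
    rw [mul_assoc, ← Complex.exp_add]
    congr 1
    ring
  simp_rw [h1]
  rw [integral_const_mul, integral_cexp_quadratic (by norm_num : ((-(1/2):ℂ)).re < 0)]
  have h4 : ((π:ℂ) / -(-(1/2))) ^ (1/2 : ℂ) = (Real.sqrt (2 * π) : ℂ) := by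
    have h5 : ((π:ℂ) / -(-(1/2))) = ((2 * π : ℝ) : ℂ) := by push_cast; ring
    have h6 : ((1:ℂ)/2) = ((1/2 : ℝ) : ℂ) := by norm_num
    rw [h5, h6, ← Complex.ofReal_cpow (by positivity), ← Real.sqrt_eq_rpow]
  rw [h4, ← mul_assoc, inv_mul_cancel₀ (by exact_mod_cast hpos.ne'), one_mul]
  congr 1
  have hI : Complex.I ^ 2 = -1 := Complex.I_sq
  field_simp
  ring_nf
  rw [hI]
  ring

set_option maxHeartbeats 1000000 in
/-- Characteristic function of a gNTS marginal: if the (extended) Laplace transform of the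
nonnegative random variable `T` is `E[e^{wT}] = exp(−t((θ − w)^{α/2} − θ^{α/2}))` for all
complex `w` with `Re w ≤ 0`, `Z` is a standard normal independent of `T`, and
`X = μt + βT + σ√T·Z`, then `E[e^{iuX}] = exp(iμut − t((θ − iβu + σ²u²/2)^{α/2} − θ^{α/2}))`. -/
theorem gNTS_marginal_characteristic_function
    {Ω : Type*} [MeasurableSpace Ω] (P : Measure Ω) [IsProbabilityMeasure P]
    (t α θ μ β σ : ℝ) (ht : 0 < t) (hα : α ∈ Set.Ioo (0 : ℝ) 2) (hθ : 0 < θ) (hσ : 0 < σ)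
    (T Z : Ω → ℝ) (hTm : Measurable T) (hZm : Measurable Z)
    (hTnn : ∀ ω, 0 ≤ T ω)
    (hTlaplace : ∀ w : ℂ, w.re ≤ 0 →
      (∫ ω, Complex.exp (w * T ω) ∂P)
        = Complex.exp (-(t : ℂ) * (((θ : ℂ) - w) ^ ((α : ℂ) / 2) - (θ : ℂ) ^ ((α : ℂ) / 2))))
    (hZlaw : P.map Z = gaussianReal 0 1)
    (hindep : IndepFun Z T P) :
    ∀ u : ℝ,
      (∫ ω, Complex.exp (Complex.I * u * (μ * t + β * T ω + σ * Real.sqrt (T ω) * Z ω)) ∂P)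
        = Complex.exp (Complex.I * μ * u * t -
            (t : ℂ) * (((θ : ℂ) - Complex.I * β * u + (σ : ℂ) ^ 2 * u ^ 2 / 2) ^ ((α : ℂ) / 2)
              - (θ : ℂ) ^ ((α : ℂ) / 2))) := by
  intro u
  set w : ℂ := ((-(σ^2 * u^2 / 2) : ℝ) : ℂ) + ((β * u : ℝ) : ℂ) * Complex.I with hw_def
  have hw_eq : w = Complex.I * β * u - (σ:ℂ)^2 * u^2 / 2 := by
    rw [hw_def]; push_cast; ring
  have hwre : w.re ≤ 0 := by
    have h0 : (0:ℝ) ≤ σ^2 * u^2 / 2 := by positivity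
    have h1 : w.re = -(σ^2 * u^2 / 2) := by
      rw [hw_def, Complex.add_re, Complex.ofReal_re, Complex.mul_re, Complex.I_re,
        Complex.I_im, Complex.ofReal_re, Complex.ofReal_im]
      ring
    linarith [h1]
  have hFmeas : Measurable (fun p : ℝ × ℝ =>
      Complex.exp (Complex.I * u * (μ * t + β * p.1 + σ * Real.sqrt p.1 * p.2))) := by
    apply Complex.measurable_exp.comp
    fun_prop
  have hFnorm : ∀ p : ℝ × ℝ,
      ‖Complex.exp (Complex.I * u * (μ * t + β * p.1 + σ * Real.sqrt p.1 * p.2))‖ = 1 := by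
    intro p
    simp only [Complex.norm_exp]
    have h7 : (Complex.I * (u:ℂ) * ((μ:ℂ) * t + β * (p.1:ℂ) + σ * (Real.sqrt p.1 : ℂ) * (p.2:ℂ)))
        = Complex.I * ((u * (μ * t + β * p.1 + σ * Real.sqrt p.1 * p.2) : ℝ) : ℂ) := by
      push_cast; ring
    rw [h7]
    simp
  have hmap : P.map (fun ω => (T ω, Z ω)) = (P.map T).prod (gaussianReal 0 1) := by
    rw [← hZlaw]
    exact (ProbabilityTheory.indepFun_iff_map_prod_eq_prod_map_map
      hTm.aemeasurable hZm.aemeasurable).mp hindep.symm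
  have hTZ : AEMeasurable (fun ω => (T ω, Z ω)) P := (hTm.prodMk hZm).aemeasurable
  have step1 : (∫ ω, Complex.exp (Complex.I * u * (μ * t + β * T ω + σ * Real.sqrt (T ω) * Z ω)) ∂P)
      = ∫ p : ℝ × ℝ, Complex.exp (Complex.I * u * (μ * t + β * p.1 + σ * Real.sqrt p.1 * p.2))
          ∂((P.map T).prod (gaussianReal 0 1)) := by
    rw [← hmap, integral_map hTZ hFmeas.aestronglyMeasurable]
  haveI : IsProbabilityMeasure (P.map T) := Measure.isProbabilityMeasure_map hTm.aemeasurable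
  have hFint : Integrable (fun p : ℝ × ℝ =>
      Complex.exp (Complex.I * u * (μ * t + β * p.1 + σ * Real.sqrt p.1 * p.2)))
      ((P.map T).prod (gaussianReal 0 1)) := by
    refine (integrable_const (1:ℝ)).mono' hFmeas.aestronglyMeasurable ?_
    exact Filter.Eventually.of_forall fun p => le_of_eq (hFnorm p)
  have step2 : (∫ p : ℝ × ℝ, Complex.exp (Complex.I * u * (μ * t + β * p.1 + σ * Real.sqrt p.1 * p.2))
          ∂((P.map T).prod (gaussianReal 0 1)))
      = ∫ s, ∫ z, Complex.exp (Complex.I * u * (μ * t + β * s + σ * Real.sqrt s * z))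
          ∂(gaussianReal 0 1) ∂(P.map T) :=
    MeasureTheory.integral_prod _ hFint
  have hinner : ∀ s : ℝ, (∫ z, Complex.exp (Complex.I * u * (μ * t + β * s + σ * Real.sqrt s * z))
          ∂(gaussianReal 0 1))
      = Complex.exp (Complex.I * u * (μ * t + β * s)) *
          Complex.exp (-(((u * σ * Real.sqrt s : ℝ) : ℂ))^2 / 2) := by
    intro s
    have hfe : (fun z : ℝ => Complex.exp (Complex.I * u * (μ * t + β * s + σ * Real.sqrt s * z)))
        = fun z : ℝ =>
        Complex.exp (Complex.I * u * (μ * t + β * s)) *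
          Complex.exp (Complex.I * ((u * σ * Real.sqrt s : ℝ) : ℂ) * z) := by
      funext z
      rw [← Complex.exp_add]
      congr 1
      push_cast
      ring
    rw [hfe, integral_const_mul, gauss_char (u * σ * Real.sqrt s)]
  have hae : ∀ᵐ s ∂(P.map T), 0 ≤ s := by
    rw [ae_map_iff hTm.aemeasurable measurableSet_Ici]
    exact Filter.Eventually.of_forall hTnn
  have hcongr : ∀ᵐ s ∂(P.map T),
      (∫ z, Complex.exp (Complex.I * u * (μ * t + β * s + σ * Real.sqrt s * z))
          ∂(gaussianReal 0 1))
        = Complex.exp (Complex.I * u * (μ * t)) * Complex.exp (w * s) := by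
    filter_upwards [hae] with s hs
    rw [hinner s]
    have hsq : (Real.sqrt s) ^ 2 = s := Real.sq_sqrt hs
    rw [← Complex.exp_add, ← Complex.exp_add]
    congr 1
    have h9 : ((Real.sqrt s : ℝ) : ℂ)^2 = (s : ℂ) := by
      rw [← Complex.ofReal_pow, hsq]
    have h8 : (((u * σ * Real.sqrt s : ℝ) : ℂ))^2 = (u:ℂ)^2 * (σ:ℂ)^2 * (s:ℂ) := by
      push_cast
      rw [mul_pow, mul_pow, h9]
    rw [h8, hw_eq]
    push_cast
    ring
  have step3 : (∫ s, ∫ z, Complex.exp (Complex.I * u * (μ * t + β * s + σ * Real.sqrt s * z))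
          ∂(gaussianReal 0 1) ∂(P.map T))
      = Complex.exp (Complex.I * u * (μ * t)) * ∫ s, Complex.exp (w * s) ∂(P.map T) := by
    rw [integral_congr_ae hcongr, integral_const_mul]
  have step4 : (∫ s, Complex.exp (w * s) ∂(P.map T)) = ∫ ω, Complex.exp (w * T ω) ∂P := by
    rw [integral_map hTm.aemeasurable]
    exact (Complex.measurable_exp.comp
      (measurable_const.mul Complex.measurable_ofReal)).aestronglyMeasurable
  have hθw : (θ:ℂ) - w = (θ : ℂ) - Complex.I * β * u + (σ : ℂ) ^ 2 * u ^ 2 / 2 := by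
    rw [hw_eq]; ring
  rw [step1, step2, step3, step4, hTlaplace w hwre, hθw, ← Complex.exp_add]
  congr 1
  ring
end

section
/- Let α ∈ (0,2), θ > 0, c > 0, t > 0, and let T be a nonnegative real random variable such that E[e^{−λT}] = exp(−ct·((θ + λ)^{α/2} − θ^{α/2})) for all λ ≥ 0. Then T and T² are integrable, E[T] = (ctα/2)·θ^{α/2−1}, and Var(T) = ct·(α/2)·(1 − α/2)·θ^{α/2−2}. -/
open MeasureTheory ProbabilityTheory Filter Set

lemma lim1 {F : ℝ → ℝ} {m : ℝ} (hF : HasDerivAt F m 0) (hF0 : F 0 = 0) :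
    Tendsto (fun x => F x / x) (nhdsWithin 0 (Set.Ioi 0)) (nhds m) := by
  have h := hasDerivAt_iff_tendsto_slope.mp hF
  have h2 : Tendsto (slope F 0) (nhdsWithin 0 (Set.Ioi 0)) (nhds m) :=
    h.mono_left (nhdsWithin_mono _ (fun x hx => ne_of_gt hx))
  refine h2.congr (fun x => ?_)
  simp [slope_def_field, hF0]

lemma lim2 {F G : ℝ → ℝ} {L : ℝ}
    (hFG : ∀ x ∈ Set.Ioo (0:ℝ) 1, HasDerivAt F (G x) x)
    (hF0 : Tendsto F (nhdsWithin 0 (Set.Ioi 0)) (nhds 0))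
    (hG : HasDerivAt G L 0) (hG0 : G 0 = 0) :
    Tendsto (fun x => F x / x ^ 2) (nhdsWithin 0 (Set.Ioi 0)) (nhds (L / 2)) := by
  apply HasDerivAt.lhopital_zero_right_on_Ioo (f' := G) (g' := fun x => 2 * x) one_pos hFG
  · intro x _
    simpa using hasDerivAt_pow 2 x
  · intro x hx
    have : (0:ℝ) < x := hx.1
    positivity
  · exact hF0
  · have : Tendsto (fun x : ℝ => x ^ 2) (nhds 0) (nhds 0) := by
      simpa using (continuous_pow 2).tendsto (0:ℝ)
    exact this.mono_left (nhdsWithin_le_nhds (s := Set.Ioi 0))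
  · have h := lim1 hG hG0
    have := h.div_const 2
    refine this.congr (fun x => ?_)
    rw [div_div]
    ring_nf

/-- Moments of the tempered stable subordinator from its Laplace transform: if
`E[e^{−λT}] = exp(−ct((θ + λ)^{α/2} − θ^{α/2}))` for all `λ ≥ 0`, then `T` and `T²` are
integrable, `E[T] = (ctα/2)·θ^{α/2−1}` and `Var(T) = ct·(α/2)·(1 − α/2)·θ^{α/2−2}`. -/
theorem tempered_stable_subordinator_moments
    {Ω : Type*} [MeasurableSpace Ω] (P : Measure Ω) [IsProbabilityMeasure P]
    (α θ c t : ℝ) (hα : α ∈ Set.Ioo (0 : ℝ) 2) (hθ : 0 < θ) (hc : 0 < c) (ht : 0 < t)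
    (T : Ω → ℝ) (hTm : Measurable T) (hTnn : ∀ ω, 0 ≤ T ω)
    (hTlaplace : ∀ lam : ℝ, 0 ≤ lam →
      (∫ ω, Real.exp (-lam * T ω) ∂P)
        = Real.exp (-(c * t) * ((θ + lam) ^ (α / 2) - θ ^ (α / 2)))) :
    Integrable T P ∧ Integrable (fun ω => T ω ^ 2) P ∧
    (∫ ω, T ω ∂P) = c * t * α / 2 * θ ^ (α / 2 - 1) ∧
    variance T P = c * t * (α / 2) * (1 - α / 2) * θ ^ (α / 2 - 2) := by
  obtain ⟨hα0, hα2⟩ := hα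
  set p : ℝ := α / 2 with hp
  set A : ℝ := c * t with hA
  have hp0 : 0 < p := by positivity
  have hp1 : p < 1 := by rw [hp]; linarith
  have hApos : 0 < A := by positivity
  set f : ℝ → ℝ := fun l => Real.exp (-A * ((θ + l) ^ p - θ ^ p)) with hf
  set D : ℝ → ℝ := fun x => -(A * p) * (θ + x) ^ (p - 1) * f x with hD
  set mm : ℝ := A * p * θ ^ (p - 1) with hmm
  set vv : ℝ := A * p * (1 - p) * θ ^ (p - 2) with hvv
  have hθx : ∀ x : ℝ, 0 ≤ x → (0:ℝ) < θ + x := fun x hx => by linarith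
  have hf0 : f 0 = 1 := by simp [hf]
  have hfderiv : ∀ x : ℝ, 0 ≤ x → HasDerivAt f (D x) x := by
    intro x hx
    have h1 : HasDerivAt (fun l : ℝ => θ + l) 1 x := (hasDerivAt_id x).const_add θ
    have h2 : HasDerivAt (fun l : ℝ => (θ + l) ^ p) (1 * p * (θ + x) ^ (p - 1)) x :=
      h1.rpow_const (Or.inl (hθx x hx).ne')
    have h3 : HasDerivAt (fun l : ℝ => -A * ((θ + l) ^ p - θ ^ p))
        (-A * (1 * p * (θ + x) ^ (p - 1))) x := (h2.sub_const _).const_mul (-A)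
    have h4 := h3.exp
    convert h4 using 1
    rw [hD, hf]
    ring
  have hD0val : D 0 = -mm := by
    rw [hD, hmm]
    simp only [add_zero, hf0]
    ring
  have hDderiv : HasDerivAt D (mm ^ 2 + vv) 0 := by
    have h1 : HasDerivAt (fun l : ℝ => θ + l) 1 0 := (hasDerivAt_id 0).const_add θ
    have h2 : HasDerivAt (fun l : ℝ => (θ + l) ^ (p - 1)) (1 * (p - 1) * (θ + 0) ^ (p - 1 - 1)) 0 :=
      h1.rpow_const (Or.inl (by simpa using hθ.ne'))
    have h3 : HasDerivAt (fun l : ℝ => -(A * p) * (θ + l) ^ (p - 1))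
        (-(A * p) * (1 * (p - 1) * (θ + 0) ^ (p - 1 - 1))) 0 := h2.const_mul _
    have h4 := h3.mul (hfderiv 0 le_rfl)
    convert h4 using 1
    · rfl
    · rfl
    · rfl
    rw [hD0val]
    simp only [add_zero, hf0]
    rw [show p - 1 - 1 = p - 2 by ring, hmm, hvv]
    ring
  -- sequence tending to 0 from the right
  set s : ℕ → ℝ := fun n => ((n:ℝ) + 1)⁻¹ with hs
  have hs_pos : ∀ n, 0 < s n := fun n => by positivity
  have hs_tendsto : Tendsto s atTop (nhdsWithin 0 (Set.Ioi 0)) := by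
    apply tendsto_nhdsWithin_of_tendsto_nhds_of_eventually_within
    · simpa [hs, one_div] using tendsto_one_div_add_atTop_nhds_zero_nat (𝕜 := ℝ)
    · exact Eventually.of_forall fun n => hs_pos n
  have hexp_le_one : ∀ (lam : ℝ), 0 ≤ lam → ∀ ω, Real.exp (-lam * T ω) ≤ 1 := by
    intro lam hlam ω
    rw [Real.exp_le_one_iff]
    have := hTnn ω
    nlinarith
  have hexp_meas : ∀ lam : ℝ, Measurable (fun ω => Real.exp (-lam * T ω)) :=
    fun lam => (hTm.const_mul (-lam)).exp
  have hexp_int : ∀ lam : ℝ, 0 ≤ lam → Integrable (fun ω => Real.exp (-lam * T ω)) P := by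
    intro lam hlam
    apply Integrable.mono' (integrable_const 1) (hexp_meas lam).aestronglyMeasurable
    refine Eventually.of_forall fun ω => ?_
    rw [Real.norm_eq_abs, abs_of_pos (Real.exp_pos _)]
    exact hexp_le_one lam hlam ω
  -- first moment approximants
  set g1 : ℕ → Ω → ℝ := fun n ω => (1 - Real.exp (-(s n) * T ω)) / s n with hg1
  have hg1_meas : ∀ n, Measurable (g1 n) :=
    fun n => (measurable_const.sub (hexp_meas (s n))).div_const _
  have hg1_nonneg : ∀ n ω, 0 ≤ g1 n ω := by
    intro n ω
    apply div_nonneg _ (hs_pos n).le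
    have := hexp_le_one (s n) (hs_pos n).le ω
    linarith
  have hg1_le : ∀ n ω, g1 n ω ≤ T ω := by
    intro n ω
    rw [hg1, div_le_iff₀ (hs_pos n)]
    have h := Real.add_one_le_exp (-(s n) * T ω)
    nlinarith
  have hg1_int : ∀ n, Integrable (g1 n) P := by
    intro n
    apply Integrable.mono' (integrable_const ((s n)⁻¹)) (hg1_meas n).aestronglyMeasurable
    refine Eventually.of_forall fun ω => ?_
    rw [Real.norm_eq_abs, abs_of_nonneg (hg1_nonneg n ω), hg1]
    have h1 : 1 - Real.exp (-(s n) * T ω) ≤ 1 := by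
      have := Real.exp_pos (-(s n) * T ω); linarith
    calc (1 - Real.exp (-(s n) * T ω)) / s n ≤ 1 / s n :=
          (div_le_div_iff_of_pos_right (hs_pos n)).mpr h1
      _ = (s n)⁻¹ := one_div _
  have hg1_val : ∀ n, ∫ ω, g1 n ω ∂P = (1 - f (s n)) / s n := by
    intro n
    rw [hg1]
    simp only
    rw [integral_div]
    congr 1
    rw [integral_sub (integrable_const 1) (hexp_int (s n) (hs_pos n).le), integral_const,
      hTlaplace (s n) (hs_pos n).le]
    simp [hf]
  have hF1 : HasDerivAt (fun l => 1 - f l) mm 0 := by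
    have h := (hfderiv 0 le_rfl).const_sub 1
    rwa [hD0val, neg_neg] at h
  have hInt1 : Tendsto (fun n => ∫ ω, g1 n ω ∂P) atTop (nhds mm) := by
    have h := (lim1 hF1 (by simp [hf0])).comp hs_tendsto
    refine h.congr fun n => ?_
    simp only [Function.comp_apply]
    rw [hg1_val n]
  have hg1_pt : ∀ ω, Tendsto (fun n => g1 n ω) atTop (nhds (T ω)) := by
    intro ω
    have hF : HasDerivAt (fun l : ℝ => 1 - Real.exp (-l * T ω)) (T ω) 0 := by
      have h1 : HasDerivAt (fun l : ℝ => -l * T ω) (-1 * T ω) 0 :=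
        (hasDerivAt_id 0).neg.mul_const (T ω)
      have h3 := h1.exp.const_sub 1
      convert h3 using 1
      · rfl
      · rfl
      simp
    have h := (lim1 hF (by simp)).comp hs_tendsto
    exact h.congr fun n => rfl
  have hTint : Integrable T P := by
    refine ⟨hTm.aestronglyMeasurable, ?_⟩
    rw [hasFiniteIntegral_iff_ofReal (Eventually.of_forall hTnn)]
    have hle : ∫⁻ ω, ENNReal.ofReal (T ω) ∂P ≤ ENNReal.ofReal mm := by
      have hlim : ∀ ω, Tendsto (fun n => ENNReal.ofReal (g1 n ω)) atTop
          (nhds (ENNReal.ofReal (T ω))) :=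
        fun ω => (ENNReal.continuous_ofReal.tendsto _).comp (hg1_pt ω)
      calc ∫⁻ ω, ENNReal.ofReal (T ω) ∂P
          = ∫⁻ ω, liminf (fun n => ENNReal.ofReal (g1 n ω)) atTop ∂P := by
            congr 1; funext ω; exact ((hlim ω).liminf_eq).symm
        _ ≤ liminf (fun n => ∫⁻ ω, ENNReal.ofReal (g1 n ω) ∂P) atTop :=
            lintegral_liminf_le fun n => (hg1_meas n).ennreal_ofReal
        _ = liminf (fun n => ENNReal.ofReal (∫ ω, g1 n ω ∂P)) atTop := by
            congr 1; funext n
            rw [← ofReal_integral_eq_lintegral_ofReal (hg1_int n)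
              (Eventually.of_forall (hg1_nonneg n))]
        _ = ENNReal.ofReal mm := ((ENNReal.continuous_ofReal.tendsto mm).comp hInt1).liminf_eq
    exact lt_of_le_of_lt hle ENNReal.ofReal_lt_top
  have hTval : ∫ ω, T ω ∂P = mm := by
    have hdct : Tendsto (fun n => ∫ ω, g1 n ω ∂P) atTop (nhds (∫ ω, T ω ∂P)) := by
      apply tendsto_integral_of_dominated_convergence T
        (fun n => (hg1_meas n).aestronglyMeasurable) hTint
      · intro n
        refine Eventually.of_forall fun ω => ?_
        rw [Real.norm_eq_abs, abs_of_nonneg (hg1_nonneg n ω)]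
        exact hg1_le n ω
      · exact Eventually.of_forall hg1_pt
    exact tendsto_nhds_unique hdct hInt1
  -- second moment approximants
  have key_ineq0 : ∀ u : ℝ, 0 ≤ Real.exp (-u) - 1 + u := by
    intro u
    have := Real.add_one_le_exp (-u)
    linarith
  have key_ineq1 : ∀ u : ℝ, 0 ≤ u → Real.exp (-u) - 1 + u ≤ u := by
    intro u hu
    have : Real.exp (-u) ≤ 1 := Real.exp_le_one_iff.mpr (by linarith)
    linarith
  have key_ineq2 : ∀ u : ℝ, 0 ≤ u → 2 * (Real.exp (-u) - 1 + u) ≤ u ^ 2 := by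
    intro u hu
    have h1 := Real.quadratic_le_exp_of_nonneg hu
    have h2 : Real.exp (-u) * Real.exp u = 1 := by
      rw [← Real.exp_add]; simp
    have h3 := (Real.exp_pos (-u)).le
    nlinarith [mul_le_mul_of_nonneg_left h1 h3, sq_nonneg u, sq_nonneg (u * u)]
  set g2 : ℕ → Ω → ℝ := fun n ω =>
    2 * (Real.exp (-(s n) * T ω) - 1 + s n * T ω) / (s n) ^ 2 with hg2
  have hneg : ∀ (n : ℕ) (ω : Ω), -(s n) * T ω = -(s n * T ω) := fun n ω => neg_mul _ _
  have hg2_meas : ∀ n, Measurable (g2 n) := fun n =>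
    (((hexp_meas (s n)).sub measurable_const).add (hTm.const_mul (s n))).const_mul 2 |>.div_const _
  have hg2_nonneg : ∀ n ω, 0 ≤ g2 n ω := by
    intro n ω
    apply div_nonneg _ (by positivity)
    have := key_ineq0 (s n * T ω)
    rw [hneg n ω] at *
    linarith
  have hg2_le_sq : ∀ n ω, g2 n ω ≤ T ω ^ 2 := by
    intro n ω
    rw [hg2, div_le_iff₀ (by positivity : (0:ℝ) < (s n) ^ 2)]
    have h := key_ineq2 (s n * T ω) (mul_nonneg (hs_pos n).le (hTnn ω))
    rw [hneg n ω]
    nlinarith [h]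
  have hg2_le_lin : ∀ n ω, g2 n ω ≤ 2 / s n * T ω := by
    intro n ω
    have h := key_ineq1 (s n * T ω) (mul_nonneg (hs_pos n).le (hTnn ω))
    have hsn := (hs_pos n).ne'
    calc g2 n ω ≤ 2 * (s n * T ω) / s n ^ 2 := by
          rw [hg2]
          apply div_le_div_of_nonneg_right ?_ (by positivity)
          rw [hneg n ω]
          nlinarith [h]
      _ = 2 / s n * T ω := by
          rw [show 2 * (s n * T ω) = 2 * T ω * s n by ring, sq,
            mul_div_mul_right _ _ hsn, div_mul_eq_mul_div]
  have hg2_int : ∀ n, Integrable (g2 n) P := by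
    intro n
    apply Integrable.mono' (hTint.const_mul (2 / s n)) (hg2_meas n).aestronglyMeasurable
    refine Eventually.of_forall fun ω => ?_
    rw [Real.norm_eq_abs, abs_of_nonneg (hg2_nonneg n ω)]
    exact hg2_le_lin n ω
  have hg2_val : ∀ n, ∫ ω, g2 n ω ∂P = 2 * (f (s n) - 1 + s n * mm) / (s n) ^ 2 := by
    intro n
    rw [hg2]
    simp only
    rw [integral_div, integral_const_mul]
    congr 2
    have i1 : Integrable (fun ω => Real.exp (-s n * T ω) - 1) P :=
      (hexp_int (s n) (hs_pos n).le).sub (integrable_const 1)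
    have i2 : Integrable (fun ω => s n * T ω) P := hTint.const_mul (s n)
    have i3 : ∫ ω, s n * T ω ∂P = s n * mm := by rw [integral_const_mul, hTval]
    rw [integral_add i1 i2,
      integral_sub (hexp_int (s n) (hs_pos n).le) (integrable_const 1),
      integral_const, i3, hTlaplace (s n) (hs_pos n).le]
    simp [hf]
  -- limit of the second-moment integrals
  have hG2 : HasDerivAt (fun l => D l + 1 * mm) (mm ^ 2 + vv) 0 := hDderiv.add_const _
  have hFG2 : ∀ x ∈ Set.Ioo (0:ℝ) 1, HasDerivAt (fun l => f l - 1 + l * mm) (D x + 1 * mm) x :=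
    fun x hx => ((hfderiv x hx.1.le).sub_const 1).add ((hasDerivAt_id x).mul_const mm)
  have hF2cont : Tendsto (fun l => f l - 1 + l * mm) (nhdsWithin 0 (Set.Ioi 0)) (nhds 0) := by
    have hc : ContinuousAt (fun l => f l - 1 + l * mm) 0 :=
      (((hfderiv 0 le_rfl).continuousAt.sub continuousAt_const).add
        (continuousAt_id.mul continuousAt_const))
    have h := hc.tendsto.mono_left (nhdsWithin_le_nhds (s := Set.Ioi 0))
    simpa [hf0] using h
  have hlim2 := lim2 hFG2 hF2cont hG2 (by rw [hD0val]; ring)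
  have hInt2 : Tendsto (fun n => ∫ ω, g2 n ω ∂P) atTop (nhds (mm ^ 2 + vv)) := by
    have h := ((hlim2.const_mul 2).comp hs_tendsto)
    have he : 2 * ((mm ^ 2 + vv) / 2) = mm ^ 2 + vv := by ring
    rw [he] at h
    refine h.congr fun n => ?_
    simp only [Function.comp_apply]
    rw [hg2_val n, mul_div_assoc]
  have hg2_pt : ∀ ω, Tendsto (fun n => g2 n ω) atTop (nhds (T ω ^ 2)) := by
    intro ω
    set x := T ω with hx
    have h1 : ∀ l : ℝ, HasDerivAt (fun l : ℝ => -l * x) (-1 * x) l :=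
      fun l => (hasDerivAt_id l).neg.mul_const x
    have hFG : ∀ l ∈ Set.Ioo (0:ℝ) 1, HasDerivAt (fun l : ℝ => Real.exp (-l * x) - 1 + l * x)
        (Real.exp (-l * x) * (-1 * x) + 1 * x) l :=
      fun l _ => (((h1 l).exp).sub_const 1).add ((hasDerivAt_id l).mul_const x)
    have hG : HasDerivAt (fun l : ℝ => Real.exp (-l * x) * (-1 * x) + 1 * x) (x ^ 2) 0 := by
      have h2 := ((h1 0).exp.mul_const (-1 * x)).add_const (1 * x)
      convert h2 using 1
      · rfl
      · rfl
      simp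
      ring
    have hFc : Tendsto (fun l : ℝ => Real.exp (-l * x) - 1 + l * x)
        (nhdsWithin 0 (Set.Ioi 0)) (nhds 0) := by
      have hc : ContinuousAt (fun l : ℝ => Real.exp (-l * x) - 1 + l * x) 0 := by fun_prop
      have h := hc.tendsto.mono_left (nhdsWithin_le_nhds (s := Set.Ioi 0))
      simpa using h
    have hl := lim2 hFG hFc hG (by simp)
    have h := ((hl.const_mul 2).comp hs_tendsto)
    have he : 2 * (x ^ 2 / 2) = x ^ 2 := by ring
    rw [he] at h
    refine h.congr fun n => ?_
    simp only [Function.comp_apply, hg2]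
    rw [mul_div_assoc]
  have hT2int : Integrable (fun ω => T ω ^ 2) P := by
    refine ⟨(hTm.pow_const 2).aestronglyMeasurable, ?_⟩
    rw [hasFiniteIntegral_iff_ofReal (Eventually.of_forall fun ω => sq_nonneg (T ω))]
    have hle : ∫⁻ ω, ENNReal.ofReal (T ω ^ 2) ∂P ≤ ENNReal.ofReal (mm ^ 2 + vv) := by
      have hlim : ∀ ω, Tendsto (fun n => ENNReal.ofReal (g2 n ω)) atTop
          (nhds (ENNReal.ofReal (T ω ^ 2))) :=
        fun ω => (ENNReal.continuous_ofReal.tendsto _).comp (hg2_pt ω)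
      calc ∫⁻ ω, ENNReal.ofReal (T ω ^ 2) ∂P
          = ∫⁻ ω, liminf (fun n => ENNReal.ofReal (g2 n ω)) atTop ∂P := by
            congr 1; funext ω; exact ((hlim ω).liminf_eq).symm
        _ ≤ liminf (fun n => ∫⁻ ω, ENNReal.ofReal (g2 n ω) ∂P) atTop :=
            lintegral_liminf_le fun n => (hg2_meas n).ennreal_ofReal
        _ = liminf (fun n => ENNReal.ofReal (∫ ω, g2 n ω ∂P)) atTop := by
            congr 1; funext n
            rw [← ofReal_integral_eq_lintegral_ofReal (hg2_int n)
              (Eventually.of_forall (hg2_nonneg n))]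
        _ = ENNReal.ofReal (mm ^ 2 + vv) :=
            ((ENNReal.continuous_ofReal.tendsto _).comp hInt2).liminf_eq
    exact lt_of_le_of_lt hle ENNReal.ofReal_lt_top
  have hT2val : ∫ ω, T ω ^ 2 ∂P = mm ^ 2 + vv := by
    have hdct : Tendsto (fun n => ∫ ω, g2 n ω ∂P) atTop (nhds (∫ ω, T ω ^ 2 ∂P)) := by
      apply tendsto_integral_of_dominated_convergence (fun ω => T ω ^ 2)
        (fun n => (hg2_meas n).aestronglyMeasurable) hT2int
      · intro n
        refine Eventually.of_forall fun ω => ?_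
        rw [Real.norm_eq_abs, abs_of_nonneg (hg2_nonneg n ω)]
        exact hg2_le_sq n ω
      · exact Eventually.of_forall hg2_pt
    exact tendsto_nhds_unique hdct hInt2
  refine ⟨hTint, hT2int, ?_, ?_⟩
  · rw [hTval, hmm, hA, hp]
    ring
  · have hmem : MemLp T 2 P := (memLp_two_iff_integrable_sq hTm.aestronglyMeasurable).mpr hT2int
    rw [variance_eq_sub hmem]
    have h2 : ∫ ω, (T ^ 2) ω ∂P = mm ^ 2 + vv := by
      simpa using hT2val
    rw [h2, hTval, hvv, hA, hp]
    ring
end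

section
/- Let α ∈ (0,2), θ > 0, β ∈ ℝ, μ ∈ ℝ and σ > 0. Define m = μ + (αβ/2)·θ^{α/2−1}, s = √((α/2)·θ^{α/2−1}·(((2−α)/(2θ))β² + σ²)) and β̄ = β/s. Then: (i) s > 0; (ii) |β̄| < 2θ^{1−α/4}/√(α(2−α)); (iii) s·β̄ = β; (iv) m + s·(−(αβ̄/2)θ^{α/2−1}) = μ; and (v) s·√((2/α)θ^{1−α/2} − ((2−α)/(2θ))β̄²) = σ. -/
/-- Parameter identities for decomposing a gNTS process into mean, scale and a standard gNTS
process (Proposition 3(b)): with `m = μ + (αβ/2)θ^{α/2−1}`,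
`s = √((α/2)θ^{α/2−1}(((2−α)/(2θ))β² + σ²))` and `β̄ = β/s`, one has `s > 0`,
`|β̄| < 2θ^{1−α/4}/√(α(2−α))`, `s·β̄ = β`, `m + s·(−(αβ̄/2)θ^{α/2−1}) = μ` and
`s·√((2/α)θ^{1−α/2} − ((2−α)/(2θ))β̄²) = σ`. -/
theorem gNTS_standardization_parameters
    (α θ β μ σ : ℝ) (hα : α ∈ Set.Ioo (0 : ℝ) 2) (hθ : 0 < θ) (hσ : 0 < σ) :
    let m : ℝ := μ + α * β / 2 * θ ^ (α / 2 - 1)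
    let s : ℝ := Real.sqrt (α / 2 * θ ^ (α / 2 - 1) * ((2 - α) / (2 * θ) * β ^ 2 + σ ^ 2))
    let βbar : ℝ := β / s
    0 < s ∧
    |βbar| < 2 * θ ^ (1 - α / 4) / Real.sqrt (α * (2 - α)) ∧
    s * βbar = β ∧
    m + s * (-(α * βbar / 2) * θ ^ (α / 2 - 1)) = μ ∧
    s * Real.sqrt (2 / α * θ ^ (1 - α / 2) - (2 - α) / (2 * θ) * βbar ^ 2) = σ := by
  obtain ⟨hα0, hα2⟩ := hα
  intro m s βbar
  have hP : (0:ℝ) < θ ^ (α / 2 - 1) := Real.rpow_pos_of_pos hθ _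
  set P := θ ^ (α / 2 - 1) with hPdef
  have h2α : (0:ℝ) < 2 - α := by linarith
  have hE : (0:ℝ) < (2 - α) / (2 * θ) * β ^ 2 + σ ^ 2 := by positivity
  have hs2 : s ^ 2 = α / 2 * P * ((2 - α) / (2 * θ) * β ^ 2 + σ ^ 2) :=
    Real.sq_sqrt (by positivity)
  have hs : 0 < s := Real.sqrt_pos.mpr (by positivity)
  have hmdef : m = μ + α * β / 2 * P := rfl
  have hβbar : βbar = β / s := rfl
  clear_value βbar s m
  have hPinv : θ ^ (1 - α / 2) = P⁻¹ := by
    rw [hPdef, ← Real.rpow_neg hθ.le]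
    ring_nf
  have h4 : 4 * θ * s ^ 2 = α * P * ((2 - α) * β ^ 2 + 2 * θ * σ ^ 2) := by
    rw [hs2]; field_simp; ring
  have hsβ : s * βbar = β := by
    rw [hβbar]; field_simp
  refine ⟨hs, ?_, hsβ, ?_, ?_⟩
  · -- (ii)
    have hQP : θ ^ (2 - α / 2) * P = θ := by
      rw [hPdef, ← Real.rpow_add hθ, show (2 - α / 2) + (α / 2 - 1) = 1 by ring,
        Real.rpow_one]
    have hQ : (θ ^ (1 - α / 4)) ^ 2 = θ ^ (2 - α / 2) := by
      rw [sq, ← Real.rpow_add hθ]; ring_nf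
    have hQpos : (0:ℝ) < θ ^ (2 - α / 2) := Real.rpow_pos_of_pos hθ _
    have h5 : 4 * θ ^ (2 - α / 2) * s ^ 2 = α * ((2 - α) * β ^ 2 + 2 * θ * σ ^ 2) := by
      have h6 : θ * (4 * θ ^ (2 - α / 2) * s ^ 2)
          = θ * (α * ((2 - α) * β ^ 2 + 2 * θ * σ ^ 2)) := by
        calc θ * (4 * θ ^ (2 - α / 2) * s ^ 2)
            = θ ^ (2 - α / 2) * (4 * θ * s ^ 2) := by ring
          _ = θ ^ (2 - α / 2) * (α * P * ((2 - α) * β ^ 2 + 2 * θ * σ ^ 2)) := by rw [h4]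
          _ = (θ ^ (2 - α / 2) * P) * (α * ((2 - α) * β ^ 2 + 2 * θ * σ ^ 2)) := by ring
          _ = θ * (α * ((2 - α) * β ^ 2 + 2 * θ * σ ^ 2)) := by rw [hQP]
      exact mul_left_cancel₀ hθ.ne' h6
    apply lt_of_pow_lt_pow_left₀ 2 (by positivity)
    rw [sq_abs, hβbar, div_pow, div_pow, mul_pow, hQ,
      Real.sq_sqrt (show (0:ℝ) ≤ α * (2 - α) by positivity),
      div_lt_div_iff₀ (by positivity) (by positivity)]
    nlinarith [h5, mul_pos hα0 (mul_pos hθ (pow_pos hσ 2))]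
  · -- (iv)
    rw [hmdef, hβbar]
    field_simp
    ring
  · -- (v)
    have hinner : 2 / α * θ ^ (1 - α / 2) - (2 - α) / (2 * θ) * βbar ^ 2 = σ ^ 2 / s ^ 2 := by
      rw [hβbar, hPinv]
      rw [div_pow]
      have hPne : P ≠ 0 := hP.ne'
      field_simp
      linear_combination h4
    rw [hinner, ← div_pow, Real.sqrt_sq (by positivity)]
    field_simp
end

section
/- Let T > 0 be a real number, α ∈ (0,2), θ > 0, β ∈ ℝ, σ ≥ 0, μ ∈ ℝ and u ∈ ℝ. Then, with principal complex powers, T·(θ − iβu + σ²u²/2)^{α/2} = (θT^{2/α} − i·(βT^{2/α})·u + (σT^{1/α})²·u²/2)^{α/2}. Consequently, exp(iμTu − T·((θ − iβu + σ²u²/2)^{α/2} − θ^{α/2})) = exp(i(μT)u − ((θ_Y − iβ_Y u + σ_Y²u²/2)^{α/2} − θ_Y^{α/2})), where θ_Y = θT^{2/α}, β_Y = βT^{2/α}, σ_Y = σT^{1/α}. -/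
open Complex

lemma real_mul_cpow_aux {r : ℝ} (hr : 0 < r) {z : ℂ} (hz : z ≠ 0) (w : ℂ) :
    ((r : ℂ) * z) ^ w = (r : ℂ) ^ w * z ^ w := by
  have hr0 : (r : ℂ) ≠ 0 := by exact_mod_cast hr.ne'
  rw [Complex.cpow_def_of_ne_zero (mul_ne_zero hr0 hz),
    Complex.cpow_def_of_ne_zero hr0, Complex.cpow_def_of_ne_zero hz,
    Complex.log_ofReal_mul hr hz, ← Complex.exp_add,
    ← Complex.ofReal_log hr.le, add_mul]

/-- Time-rescaling of the gNTS characteristic exponent: with principal complex powers,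
`T·(θ − iβu + σ²u²/2)^{α/2} = (θT^{2/α} − i(βT^{2/α})u + (σT^{1/α})²u²/2)^{α/2}`, and hence
the characteristic function of the gNTS marginal at time `T` equals the characteristic
function at time `1` of the gNTS process with parameters `θ_Y = θT^{2/α}`, `β_Y = βT^{2/α}`,
`μ_Y = μT`, `σ_Y = σT^{1/α}`. -/
theorem gNTS_characteristic_function_time_rescaling
    (T α θ β σ μ u : ℝ) (hT : 0 < T) (hα : α ∈ Set.Ioo (0 : ℝ) 2) (hθ : 0 < θ)
    (hσ : 0 ≤ σ) :
    (T : ℂ) * ((θ : ℂ) - Complex.I * β * u + (σ : ℂ) ^ 2 * u ^ 2 / 2) ^ ((α : ℂ) / 2)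
      = (((θ * T ^ (2 / α) : ℝ) : ℂ) - Complex.I * ((β * T ^ (2 / α) : ℝ) : ℂ) * u
          + ((σ * T ^ (1 / α) : ℝ) : ℂ) ^ 2 * u ^ 2 / 2) ^ ((α : ℂ) / 2) ∧
    Complex.exp (Complex.I * μ * T * u -
        (T : ℂ) * (((θ : ℂ) - Complex.I * β * u + (σ : ℂ) ^ 2 * u ^ 2 / 2) ^ ((α : ℂ) / 2)
          - (θ : ℂ) ^ ((α : ℂ) / 2)))
      = Complex.exp (Complex.I * ((μ * T : ℝ) : ℂ) * u -
          ((((θ * T ^ (2 / α) : ℝ) : ℂ) - Complex.I * ((β * T ^ (2 / α) : ℝ) : ℂ) * u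
              + ((σ * T ^ (1 / α) : ℝ) : ℂ) ^ 2 * u ^ 2 / 2) ^ ((α : ℂ) / 2)
            - (((θ * T ^ (2 / α) : ℝ) : ℂ)) ^ ((α : ℂ) / 2))) := by
  obtain ⟨hα0, hα2⟩ := hα
  set r : ℝ := T ^ (2 / α) with hrdef
  have hr : 0 < r := Real.rpow_pos_of_pos hT _
  -- r ^ (α/2) = T
  have hrT : (r : ℂ) ^ ((α : ℂ) / 2) = (T : ℂ) := by
    have h1 : r ^ (α / 2) = T := by
      rw [hrdef, ← Real.rpow_mul hT.le]
      rw [div_mul_div_comm]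
      rw [show 2 * α / (α * 2) = 1 by field_simp, Real.rpow_one]
    calc (r : ℂ) ^ ((α : ℂ) / 2) = (r : ℂ) ^ (((α / 2 : ℝ)) : ℂ) := by push_cast; ring_nf
      _ = ((r ^ (α / 2) : ℝ) : ℂ) := (Complex.ofReal_cpow hr.le _).symm
      _ = (T : ℂ) := by rw [h1]
  -- (T^(1/α))^2 = r
  have h2 : (T ^ (1 / α)) ^ 2 = r := by
    rw [sq, ← Real.rpow_add hT, hrdef]
    norm_num
    ring_nf
  -- key lemma applied to a base with positive real part
  have key : ∀ z : ℂ, 0 < z.re →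
      (T : ℂ) * z ^ ((α : ℂ) / 2) = ((r : ℂ) * z) ^ ((α : ℂ) / 2) := by
    intro z hz
    have hz0 : z ≠ 0 := by
      intro h; rw [h] at hz; simp at hz
    rw [real_mul_cpow_aux hr hz0, hrT]
  -- the base of the left power
  have hzre : (0:ℝ) < ((θ : ℂ) - Complex.I * β * u + (σ : ℂ) ^ 2 * u ^ 2 / 2).re := by
    have e : ((θ : ℂ) - Complex.I * β * u + (σ : ℂ) ^ 2 * u ^ 2 / 2)
        = ((θ + σ ^ 2 * u ^ 2 / 2 : ℝ) : ℂ) + Complex.I * ((-(β * u) : ℝ) : ℂ) := by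
      push_cast; ring
    rw [e]
    simp only [Complex.add_re, Complex.ofReal_re, Complex.mul_re, Complex.I_re,
      Complex.I_im, Complex.ofReal_im]
    ring_nf
    positivity
  have hbase : ((r : ℂ) * ((θ : ℂ) - Complex.I * β * u + (σ : ℂ) ^ 2 * u ^ 2 / 2))
      = (((θ * r : ℝ) : ℂ) - Complex.I * ((β * r : ℝ) : ℂ) * u
          + ((σ * T ^ (1 / α) : ℝ) : ℂ) ^ 2 * u ^ 2 / 2) := by
    have h2' : ((σ * T ^ (1 / α) : ℝ) : ℂ) ^ 2 = (σ : ℂ) ^ 2 * (r : ℂ) := by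
      push_cast
      rw [mul_pow]
      norm_cast
      rw [h2]
    rw [h2']
    push_cast
    ring
  have main :
      (T : ℂ) * ((θ : ℂ) - Complex.I * β * u + (σ : ℂ) ^ 2 * u ^ 2 / 2) ^ ((α : ℂ) / 2)
      = (((θ * r : ℝ) : ℂ) - Complex.I * ((β * r : ℝ) : ℂ) * u
          + ((σ * T ^ (1 / α) : ℝ) : ℂ) ^ 2 * u ^ 2 / 2) ^ ((α : ℂ) / 2) := by
    rw [key _ hzre, hbase]
  have hθr : (T : ℂ) * (θ : ℂ) ^ ((α : ℂ) / 2) = ((θ * r : ℝ) : ℂ) ^ ((α : ℂ) / 2) := by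
    have := key (θ : ℂ) (by simpa using hθ)
    rw [this]
    push_cast
    ring_nf
  refine ⟨main, ?_⟩
  congr 1
  rw [← main, ← hθr]
  push_cast
  ring
end

section
/- Let N be a positive integer, A ⊆ {1,…,N}, and s, t : ℝ^N → ℝ^N differentiable functions. Let b⊙y denote the masked vector with (b⊙y)_i = y_i for i ∈ A and 0 otherwise, and define f : ℝ^N → ℝ^N by f(y)_i = y_i for i ∈ A and f(y)_i = (y_i − t_i(b⊙y))·exp(−s_i(b⊙y)) for i ∉ A. Then f is differentiable at every y ∈ ℝ^N and the determinant of its derivative satisfies det(Df(y)) = exp(−∑_{i∉A} s_i(b⊙y)). -/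
open ContinuousLinearMap in
/-- Jacobian determinant of a RealNVP affine coupling layer: with masking set `A` and
differentiable scale and translation networks `s`, `t`, the coupling layer `f` is
differentiable everywhere and `det(Df(y)) = exp(−∑_{i∉A} s_i(b⊙y))`. -/
theorem realNVP_coupling_layer_jacobian
    (N : ℕ) (hN : 0 < N) (A : Set (Fin N)) [DecidablePred (· ∈ A)]
    (s t : (Fin N → ℝ) → (Fin N → ℝ))
    (hs : Differentiable ℝ s) (ht : Differentiable ℝ t) :
    let mask : (Fin N → ℝ) → (Fin N → ℝ) := fun y i => if i ∈ A then y i else 0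
    let f : (Fin N → ℝ) → (Fin N → ℝ) := fun y i =>
      if i ∈ A then y i else (y i - t (mask y) i) * Real.exp (-(s (mask y) i))
    ∀ y : Fin N → ℝ,
      DifferentiableAt ℝ f y ∧
      (fderiv ℝ f y).det
        = Real.exp (-(∑ i ∈ Finset.univ.filter (fun i : Fin N => i ∉ A), s (mask y) i)) := by
  intro mask f y
  classical
  -- the mask as a continuous linear map
  set maskL : (Fin N → ℝ) →L[ℝ] (Fin N → ℝ) :=
    ContinuousLinearMap.pi (fun i => if i ∈ A then ContinuousLinearMap.proj i else 0)
    with hmaskL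
  have hmask : ∀ z, mask z = maskL z := by
    intro z; funext i
    simp only [hmaskL, ContinuousLinearMap.pi_apply, mask]
    split <;> simp
  have hmaskL_single : ∀ j : Fin N, j ∉ A → maskL (Pi.single j 1) = 0 := by
    intro j hj; funext k
    simp only [hmaskL, ContinuousLinearMap.pi_apply]
    split
    · next hk =>
      simp only [ContinuousLinearMap.proj_apply, Pi.single_apply, Pi.zero_apply]
      rw [if_neg]; rintro rfl; exact hj hk
    · simp
  -- component derivatives
  have comp : ∀ i : Fin N, ∃ D : (Fin N → ℝ) →L[ℝ] ℝ,
      HasFDerivAt (fun z => f z i) D y ∧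
      ∀ j : Fin N,
        (i ∈ A → D (Pi.single j 1) = if i = j then (1:ℝ) else 0) ∧
        (i ∉ A → j ∉ A → D (Pi.single j 1) =
          (if i = j then (1:ℝ) else 0) * Real.exp (-(s (mask y) i))) := by
    intro i
    by_cases h : i ∈ A
    · refine ⟨ContinuousLinearMap.proj i, ?_, ?_⟩
      · have : (fun z : Fin N → ℝ => f z i) = fun z => z i := by
          funext z; exact if_pos h
        rw [this]; exact hasFDerivAt_apply i y
      · intro j
        refine ⟨fun _ => ?_, fun hi _ => absurd h hi⟩
        simp [ContinuousLinearMap.proj_apply, Pi.single_apply]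
    · -- i ∉ A
      set S' : (Fin N → ℝ) →L[ℝ] ℝ :=
        (ContinuousLinearMap.proj i).comp ((fderiv ℝ s (maskL y)).comp maskL) with hS'
      set T' : (Fin N → ℝ) →L[ℝ] ℝ :=
        (ContinuousLinearMap.proj i).comp ((fderiv ℝ t (maskL y)).comp maskL) with hT'
      have hS : HasFDerivAt (fun z => s (maskL z) i) S' y :=
        by have := (hasFDerivAt_apply (𝕜 := ℝ) i (s (maskL y))).comp y
                ((((hs (maskL y)).hasFDerivAt).comp y maskL.hasFDerivAt))
           exact this
      have hT : HasFDerivAt (fun z => t (maskL z) i) T' y :=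
        by have := (hasFDerivAt_apply (𝕜 := ℝ) i (t (maskL y))).comp y
                ((((ht (maskL y)).hasFDerivAt).comp y maskL.hasFDerivAt))
           exact this
      have h1 : HasFDerivAt (fun z => z i - t (maskL z) i)
          (ContinuousLinearMap.proj i - T') y := (hasFDerivAt_apply i y).sub hT
      have h2 : HasFDerivAt (fun z => Real.exp (-(s (maskL z) i)))
          (Real.exp (-(s (maskL y) i)) • (-S')) y := hS.neg.exp
      have hfi : (fun z : Fin N → ℝ => f z i) =
          fun z => (z i - t (maskL z) i) * Real.exp (-(s (maskL z) i)) := by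
        funext z
        show (if i ∈ A then z i else (z i - t (mask z) i) * Real.exp (-(s (mask z) i))) = _
        rw [if_neg h, hmask]
      refine ⟨(y i - t (maskL y) i) • (Real.exp (-(s (maskL y) i)) • (-S')) +
          Real.exp (-(s (maskL y) i)) • (ContinuousLinearMap.proj i - T'), ?_, ?_⟩
      · rw [hfi]; exact h1.mul h2
      · intro j
        refine ⟨fun hi => absurd hi h, fun _ hj => ?_⟩
        have hz := hmaskL_single j hj
        have hSz : S' (Pi.single j 1) = 0 := by
          simp [hS', ContinuousLinearMap.comp_apply, hz]
        have hTz : T' (Pi.single j 1) = 0 := by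
          simp [hT', ContinuousLinearMap.comp_apply, hz]
        rw [hmask]
        simp only [ContinuousLinearMap.add_apply, ContinuousLinearMap.smul_apply,
          ContinuousLinearMap.neg_apply, ContinuousLinearMap.sub_apply,
          ContinuousLinearMap.proj_apply, hSz, hTz, neg_zero, smul_zero, sub_zero, zero_add,
          smul_eq_mul, Pi.single_apply]
        ring_nf
  choose D hD hDval using comp
  have hf : HasFDerivAt f (ContinuousLinearMap.pi D) y := hasFDerivAt_pi.2 hD
  refine ⟨hf.differentiableAt, ?_⟩
  rw [hf.fderiv]
  show LinearMap.det _ = _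
  rw [← LinearMap.det_toMatrix' ((ContinuousLinearMap.pi D : (Fin N → ℝ) →L[ℝ] Fin N → ℝ) :
      (Fin N → ℝ) →ₗ[ℝ] Fin N → ℝ)]
  set M := LinearMap.toMatrix' ((ContinuousLinearMap.pi D : (Fin N → ℝ) →L[ℝ] Fin N → ℝ) :
      (Fin N → ℝ) →ₗ[ℝ] Fin N → ℝ) with hMdef
  have hM : ∀ i j, M i j = D i (Pi.single j 1) := by
    intro i j
    rw [hMdef, LinearMap.toMatrix'_apply]
    have : (fun j' : Fin N => if j' = j then (1:ℝ) else 0) = Pi.single j 1 := by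
      funext k; simp [Pi.single_apply]
    rfl
  rw [Matrix.twoBlockTriangular_det' M (fun i => i ∈ A) ?_]
  · have hblock1 : (Matrix.toSquareBlockProp M fun i => i ∈ A) = 1 := by
      ext ⟨i, hi⟩ ⟨j, hj⟩
      simp only [Matrix.toSquareBlockProp, Matrix.toBlock_apply, hM, (hDval i j).1 hi,
        Matrix.one_apply, Subtype.mk.injEq]
    have hblock2 : (Matrix.toSquareBlockProp M fun i => ¬ i ∈ A) =
        Matrix.diagonal (fun i : {a : Fin N // ¬ a ∈ A} =>
          Real.exp (-(s (mask y) i.val))) := by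
      ext ⟨i, hi⟩ ⟨j, hj⟩
      simp only [Matrix.toSquareBlockProp, Matrix.toBlock_apply, hM, (hDval i j).2 hi hj,
        Matrix.diagonal_apply, Subtype.mk.injEq]
      by_cases hij : i = j
      · simp [hij]
      · simp [hij]
    rw [hblock1, hblock2, Matrix.det_one, one_mul, Matrix.det_diagonal]
    rw [← Real.exp_sum]
    congr 1
    rw [← Finset.sum_subtype (Finset.univ.filter (fun i : Fin N => i ∉ A))
      (p := fun i : Fin N => ¬ i ∈ A) (fun x => by simp) (fun i => -(s (mask y) i))]
    rw [Finset.sum_neg_distrib]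
  · intro i hi j hj
    rw [hM, (hDval i j).1 hi, if_neg]
    rintro rfl; exact hj hi
end
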